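/- arXiv:2104.08471 — 4 statements merged into one kernel-verified Lean document; each statement's English description precedes it below -/
import Mathlib

section
/- Let (Ω, H, E) be a sub-linear expectation space and define H₁ = {X ∈ H : lim_{c,d→∞} E[(|X| ∧ d − c)⁺] = 0}. Then for every X ∈ H₁ the limit Ê[X] := lim_{c→∞} E[(−c) ∨ X ∧ c] exists and is finite, and Ê is a sub-linear expectation on H₁ (monotone, constant-preserving, sub-additive, positively homogeneous). -/
open Filter MeasureTheory Set
open scoped ENNReal

noncomputable section

/-- A sub-linear expectation space: `H` is a linear space of real functions on `Ω`
(closed under composition with locally Lipschitz functions and containing constants),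
and `E` is monotone, constant preserving, sub-additive and positively homogeneous on `H`. -/
structure SLE (Ω : Type*) where
  H : Set (Ω → ℝ)
  E : (Ω → ℝ) → ℝ
  const_mem : ∀ c : ℝ, (fun _ => c) ∈ H
  comp_mem : ∀ (n : ℕ) (Xs : Fin n → Ω → ℝ), (∀ i, Xs i ∈ H) →
      ∀ f : (Fin n → ℝ) → ℝ, LocallyLipschitz f →
      (fun ω => f (fun i => Xs i ω)) ∈ H
  mono : ∀ X ∈ H, ∀ Y ∈ H, (∀ ω, X ω ≤ Y ω) → E X ≤ E Y
  const : ∀ c : ℝ, E (fun _ => c) = c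
  subadd : ∀ X ∈ H, ∀ Y ∈ H, E (fun ω => X ω + Y ω) ≤ E X + E Y
  poshomog : ∀ X ∈ H, ∀ l : ℝ, 0 ≤ l → E (fun ω => l * X ω) = l * E X

namespace SLE

variable {Ω : Type*}

/-- The truncation `X^(c) = (-c) ∨ X ∧ c`. -/
def trunc (X : Ω → ℝ) (c : ℝ) : Ω → ℝ := fun ω => max (-c) (min (X ω) c)

/-- The upper capacity `V(A) = inf{E[ξ] : I_A ≤ ξ, ξ ∈ H}`. -/
def V (S : SLE Ω) (A : Set Ω) : ℝ :=
  sInf {r | ∃ ξ ∈ S.H, (∀ ω, 0 ≤ ξ ω) ∧ (∀ ω ∈ A, (1 : ℝ) ≤ ξ ω) ∧ S.E ξ = r}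

/-- `H₁ = {X ∈ H : lim_{c,d→∞} E[(|X| ∧ d - c)⁺] = 0}`. -/
def H1 (S : SLE Ω) : Set (Ω → ℝ) :=
  {X | X ∈ S.H ∧
    Tendsto (fun cd : ℝ × ℝ => S.E (fun ω => max (min |X ω| cd.2 - cd.1) 0))
      (atTop ×ˢ atTop) (nhds 0)}

/-- `Ê[X] = lim_{c→∞} E[(-c) ∨ X ∧ c]` (the limit along `c → ∞`, when it exists). -/
def EHat (S : SLE Ω) (X : Ω → ℝ) : ℝ :=
  limUnder atTop (fun c : ℝ => S.E (trunc X c))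

/-- Countably sub-additive extension of the upper capacity. -/
def Vstar (S : SLE Ω) (A : Set Ω) : ℝ≥0∞ :=
  ⨅ (B : ℕ → Set Ω) (_ : A ⊆ ⋃ n, B n), ∑' n, ENNReal.ofReal (S.V (B n))

/-- Bounded Lipschitz test functions on `ℝ`. -/
def BLip (φ : ℝ → ℝ) : Prop :=
  (∃ K, LipschitzWith K φ) ∧ ∃ M, ∀ x, |φ x| ≤ M

/-- Peng's independence for a sequence of random variables: `X (n)` is independent
of `(X 0, …, X (n-1))` for every `n`, tested on bounded Lipschitz functions. -/
def Indep (S : SLE Ω) (X : ℕ → Ω → ℝ) : Prop :=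
  ∀ n : ℕ, ∀ φ : (Fin n → ℝ) → ℝ → ℝ,
    (∃ K, LipschitzWith K (fun p : (Fin n → ℝ) × ℝ => φ p.1 p.2)) →
    (∃ M, ∀ a b, |φ a b| ≤ M) →
    S.E (fun ω => φ (fun i => X i ω) (X n ω)) =
      S.E (fun ω => S.E (fun ω' => φ (fun i => X i ω) (X n ω')))

/-- Identical distribution of a sequence. -/
def IdentDist (S : SLE Ω) (X : ℕ → Ω → ℝ) : Prop :=
  ∀ n, ∀ φ : ℝ → ℝ, BLip φ → S.E (fun ω => φ (X n ω)) = S.E (fun ω => φ (X 0 ω))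

/-- Regularity of a sub-linear expectation: `E[Yₙ] ↓ 0` whenever bounded `Yₙ ↓ 0`. -/
def Regular (S : SLE Ω) : Prop :=
  ∀ Y : ℕ → Ω → ℝ, (∀ n, Y n ∈ S.H) → (∃ M, ∀ n ω, |Y n ω| ≤ M) →
    (∀ ω, Antitone fun n => Y n ω) → (∀ ω, Tendsto (fun n => Y n ω) atTop (nhds 0)) →
    Tendsto (fun n => S.E (Y n)) atTop (nhds 0)

end SLE

private lemma lip1 (f : ℝ → ℝ) (h : ∀ x y, |f x - f y| ≤ |x - y|) : LipschitzWith 1 f :=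
  LipschitzWith.of_dist_le_mul (by simpa [Real.dist_eq] using h)

private lemma lip_clamp (c : ℝ) : LipschitzWith 1 (fun x : ℝ => max (-c) (min x c)) := by
  apply lip1; intro x y
  have h1 := le_abs_self (x - y); have h2 := neg_abs_le (x - y)
  rw [abs_le]; constructor <;> simp only [min_def, max_def] <;> split_ifs <;> linarith

private lemma lip_g (c d : ℝ) : LipschitzWith 1 (fun x : ℝ => max (min |x| d - c) 0) := by
  apply lip1; intro x y
  have h1 := le_abs_self (x - y); have h2 := neg_abs_le (x - y)
  rcases abs_cases x with ⟨hx, hx0⟩ | ⟨hx, hx0⟩ <;> rcases abs_cases y with ⟨hy, hy0⟩ | ⟨hy, hy0⟩ <;>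
    rw [hx, hy, abs_le] <;> constructor <;> simp only [min_def, max_def] <;> split_ifs <;> linarith

private lemma lip_addp : LipschitzWith 2 (fun p : ℝ × ℝ => p.1 + p.2) := by
  apply LipschitzWith.of_dist_le_mul; intro p q
  have h1 := (LipschitzWith.prod_fst (α := ℝ) (β := ℝ)).dist_le_mul p q
  have h2 := (LipschitzWith.prod_snd (α := ℝ) (β := ℝ)).dist_le_mul p q
  have h3 : dist (p.1 + p.2) (q.1 + q.2) ≤ dist p.1 q.1 + dist p.2 q.2 := dist_add_add_le _ _ _ _
  push_cast at *; linarith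

private lemma truncR_key (x c c' : ℝ) (h0 : 0 ≤ c) (h : c ≤ c') :
    |max (-c') (min x c') - max (-c) (min x c)| ≤ max (min |x| c' - c) 0 := by
  rcases abs_cases x with ⟨hx, hx0⟩ | ⟨hx, hx0⟩ <;>
    rw [hx, abs_le] <;> constructor <;>
    simp only [min_def, max_def] <;> split_ifs <;> linarith

private lemma gR_tri (x y c d : ℝ) (hd : 0 ≤ d) :
    max (min |x + y| d - c) 0 ≤ max (min |x| d - c / 2) 0 + max (min |y| d - c / 2) 0 := by
  have key : ∀ s a b : ℝ, 0 ≤ a → 0 ≤ b → 0 ≤ s → s ≤ a + b →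
      max (min s d - c) 0 ≤ max (min a d - c / 2) 0 + max (min b d - c / 2) 0 := by
    intro s a b ha hb hs hab
    simp only [min_def, max_def]; split_ifs <;> linarith
  exact key _ _ _ (abs_nonneg x) (abs_nonneg y) (abs_nonneg _) (abs_add_le x y)

/-- `G x c = trunc x c + (min |x| c - c/2)⁺`. -/
private noncomputable def GG (x c : ℝ) : ℝ := max (-c) (min x c) + max (min |x| c - c / 2) 0

private lemma claim1 (x c : ℝ) (hc : 0 ≤ c) : -(c / 2) ≤ GG x c := by
  unfold GG
  rcases abs_cases x with ⟨hx, hx0⟩ | ⟨hx, hx0⟩ <;>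
    rw [hx] <;> simp only [min_def, max_def] <;> split_ifs <;> linarith

private lemma claim2 (x c : ℝ) (hc : 0 ≤ c) (h : x ≤ c) : x ≤ GG x c := by
  unfold GG
  rcases abs_cases x with ⟨hx, hx0⟩ | ⟨hx, hx0⟩ <;>
    rw [hx] <;> simp only [min_def, max_def] <;> split_ifs <;> linarith

private lemma claim5 (x c : ℝ) (hc : 0 ≤ c) (h : c ≤ x) : 3 * c / 2 ≤ GG x c := by
  unfold GG
  rcases abs_cases x with ⟨hx, hx0⟩ | ⟨hx, hx0⟩ <;>
    rw [hx] <;> simp only [min_def, max_def] <;> split_ifs <;> linarith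

private lemma claim6 (x c : ℝ) (hc : 0 ≤ c) (h1 : c / 2 ≤ x) (h2 : x ≤ c) :
    2 * x - c / 2 ≤ GG x c := by
  unfold GG
  rcases abs_cases x with ⟨hx, hx0⟩ | ⟨hx, hx0⟩ <;>
    rw [hx] <;> simp only [min_def, max_def] <;> split_ifs <;> linarith

private lemma claim7 (x c : ℝ) (hc : 0 ≤ c) (h : c / 2 ≤ x) : c / 2 ≤ GG x c := by
  rcases le_total x c with h2 | h2
  · have := claim6 x c hc h h2; linarith
  · have := claim5 x c hc h2; linarith

private lemma truncR_add (x y c : ℝ) (hc : 0 ≤ c) :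
    max (-c) (min (x + y) c) ≤ max (-c) (min x c) + max (-c) (min y c)
      + max (min |x| c - c / 2) 0 + max (min |y| c - c / 2) 0 := by
  have hmain : max (-c) (min (x + y) c) ≤ GG x c + GG y c := by
    have hg1x := claim1 x c hc; have hg1y := claim1 y c hc
    rcases le_total (x + y) c with h | h
    · rw [min_eq_left h]
      apply max_le (by linarith)
      rcases le_total x c with hx | hx
      · rcases le_total y c with hy | hy
        · have := claim2 x c hc hx; have := claim2 y c hc hy; linarith
        · have := claim5 y c hc hy; linarith
      · have := claim5 x c hc hx; linarith
    · rw [min_eq_right h, max_eq_right (by linarith)]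
      rcases le_total x (c / 2) with hx | hx
      · rcases le_total y (c / 2) with hy | hy
        · have := claim2 x c hc (by linarith); have := claim2 y c hc (by linarith); linarith
        · -- y ≥ c/2
          rcases le_total y c with hyc | hyc
          · have := claim6 y c hc hy hyc; have := claim2 x c hc (by linarith); linarith
          · have := claim5 y c hc hyc; linarith
      · rcases le_total y (c / 2) with hy | hy
        · rcases le_total x c with hxc | hxc
          · have := claim6 x c hc hx hxc; have := claim2 y c hc (by linarith); linarith
          · have := claim5 x c hc hxc; linarith
        · have := claim7 x c hc hx; have := claim7 y c hc hy; linarith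
  unfold GG at hmain; linarith



namespace SLE
variable {Ω : Type*} (S : SLE Ω)

lemma mem_comp1 {X : Ω → ℝ} (hX : X ∈ S.H) {f : ℝ → ℝ} (hf : LocallyLipschitz f) :
    (fun ω => f (X ω)) ∈ S.H := by
  have hev : LocallyLipschitz (fun v : Fin 1 → ℝ => v 0) :=
    (LipschitzWith.eval 0).locallyLipschitz
  exact S.comp_mem 1 (fun _ => X) (fun _ => hX) (fun v => f (v 0)) (hf.comp hev)

lemma mem_comp2 {X Y : Ω → ℝ} (hX : X ∈ S.H) (hY : Y ∈ S.H)
    {f : ℝ → ℝ → ℝ} (hf : LocallyLipschitz fun p : ℝ × ℝ => f p.1 p.2) :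
    (fun ω => f (X ω) (Y ω)) ∈ S.H := by
  have hev : LocallyLipschitz (fun v : Fin 2 → ℝ => (v 0, v 1)) :=
    ((LipschitzWith.eval (α := fun _ : Fin 2 => ℝ) 0).prodMk
      (LipschitzWith.eval 1)).locallyLipschitz
  have h := S.comp_mem 2 ![X, Y] (by intro i; fin_cases i <;> assumption)
    (fun v => f (v 0) (v 1)) (hf.comp hev)
  simpa using h

lemma mem_add {X Y : Ω → ℝ} (hX : X ∈ S.H) (hY : Y ∈ S.H) :
    (fun ω => X ω + Y ω) ∈ S.H :=
  S.mem_comp2 hX hY (f := fun a b => a + b) lip_addp.locallyLipschitz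

lemma mem_trunc {X : Ω → ℝ} (hX : X ∈ S.H) (c : ℝ) : SLE.trunc X c ∈ S.H :=
  S.mem_comp1 hX (lip_clamp c).locallyLipschitz

lemma mem_g {X : Ω → ℝ} (hX : X ∈ S.H) (c d : ℝ) :
    (fun ω => max (min |X ω| d - c) 0) ∈ S.H :=
  S.mem_comp1 hX (lip_g c d).locallyLipschitz

lemma E_nonneg {ξ : Ω → ℝ} (hξ : ξ ∈ S.H) (h : ∀ ω, 0 ≤ ξ ω) : 0 ≤ S.E ξ := by
  have := S.mono _ (S.const_mem 0) _ hξ h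
  rwa [S.const] at this

lemma E_abs_le {X Y Z : Ω → ℝ} (hX : X ∈ S.H) (hY : Y ∈ S.H) (hZ : Z ∈ S.H)
    (h : ∀ ω, |X ω - Y ω| ≤ Z ω) : |S.E X - S.E Y| ≤ S.E Z := by
  rw [abs_sub_le_iff]
  constructor
  · have h1 : S.E X ≤ S.E (fun ω => Y ω + Z ω) :=
      S.mono _ hX _ (S.mem_add hY hZ) (fun ω => by
        have := h ω; rw [abs_sub_le_iff] at this; linarith [this.1])
    have h2 := S.subadd _ hY _ hZ
    linarith
  · have h1 : S.E Y ≤ S.E (fun ω => X ω + Z ω) :=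
      S.mono _ hY _ (S.mem_add hX hZ) (fun ω => by
        have := h ω; rw [abs_sub_le_iff] at this; linarith [this.2])
    have h2 := S.subadd _ hX _ hZ
    linarith

lemma tendsto_EHat {X : Ω → ℝ} (hX : X ∈ S.H1) :
    Tendsto (fun c : ℝ => S.E (SLE.trunc X c)) atTop (nhds (S.EHat X)) := by
  obtain ⟨hXH, hX2⟩ := hX
  have hC : CauchySeq (fun c : ℝ => S.E (SLE.trunc X c)) := by
    rw [Metric.cauchySeq_iff]
    intro ε hε
    have h2 := Metric.tendsto_nhds.mp hX2 ε hε
    rw [prod_atTop_atTop_eq, eventually_atTop] at h2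
    obtain ⟨p, hp⟩ := h2
    refine ⟨max (max p.1 p.2) 0, ?_⟩
    have key : ∀ a b : ℝ, max (max p.1 p.2) 0 ≤ a → a ≤ b →
        dist (S.E (SLE.trunc X b)) (S.E (SLE.trunc X a)) < ε := by
      intro a b ha hab
      have h0a : (0:ℝ) ≤ a := le_trans (le_max_right _ _) ha
      have hineq : ∀ ω, |SLE.trunc X b ω - SLE.trunc X a ω| ≤ max (min |X ω| b - a) 0 :=
        fun ω => truncR_key (X ω) a b h0a hab
      have hE := S.E_abs_le (S.mem_trunc hXH b) (S.mem_trunc hXH a) (S.mem_g hXH a b) hineq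
      have hdist := hp (a, b) (Prod.le_def.mpr
        ⟨le_trans (le_trans (le_max_left p.1 p.2) (le_max_left _ _)) ha,
         le_trans (le_trans (le_max_right p.1 p.2) (le_max_left _ _)) (le_trans ha hab)⟩)
      rw [Real.dist_eq, sub_zero] at hdist
      rw [Real.dist_eq]
      calc |S.E (SLE.trunc X b) - S.E (SLE.trunc X a)|
          ≤ S.E (fun ω => max (min |X ω| b - a) 0) := hE
        _ ≤ |S.E (fun ω => max (min |X ω| b - a) 0)| := le_abs_self _
        _ < ε := hdist
    intro m hm n hn
    rcases le_total n m with h | h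
    · exact key n m hn h
    · rw [dist_comm]; exact key m n hm h
  obtain ⟨L, hL⟩ := cauchySeq_tendsto_of_complete hC
  have hE : S.EHat X = L := hL.limUnder_eq
  rw [hE]; exact hL

lemma H1_add {X Y : Ω → ℝ} (hX : X ∈ S.H1) (hY : Y ∈ S.H1) :
    (fun ω => X ω + Y ω) ∈ S.H1 := by
  have hXYH : (fun ω => X ω + Y ω) ∈ S.H := S.mem_add hX.1 hY.1
  refine ⟨hXYH, ?_⟩
  have hm : Tendsto (fun cd : ℝ × ℝ => (cd.1 / 2, cd.2)) (atTop ×ˢ atTop) (atTop ×ˢ atTop) :=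
    (tendsto_fst.atTop_div_const two_pos).prodMk tendsto_snd
  have hU : Tendsto (fun cd : ℝ × ℝ =>
      S.E (fun ω => max (min |X ω| cd.2 - cd.1 / 2) 0)
      + S.E (fun ω => max (min |Y ω| cd.2 - cd.1 / 2) 0)) (atTop ×ˢ atTop) (nhds 0) := by
    have := (hX.2.comp hm).add (hY.2.comp hm)
    simpa using this
  refine tendsto_of_tendsto_of_tendsto_of_le_of_le' tendsto_const_nhds hU ?_ ?_
  · exact Eventually.of_forall fun cd =>
      S.E_nonneg (S.mem_g hXYH cd.1 cd.2) (fun ω => le_max_right _ _)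
  · have hev : ∀ᶠ cd : ℝ × ℝ in atTop ×ˢ atTop, 0 ≤ cd.2 := by
      rw [prod_atTop_atTop_eq, eventually_atTop]
      exact ⟨(0, 0), fun q hq => (Prod.le_def.mp hq).2⟩
    filter_upwards [hev] with cd hd2
    have hpt : ∀ ω, max (min |X ω + Y ω| cd.2 - cd.1) 0 ≤
        (fun ω => max (min |X ω| cd.2 - cd.1 / 2) 0) ω
        + (fun ω => max (min |Y ω| cd.2 - cd.1 / 2) 0) ω :=
      fun ω => gR_tri (X ω) (Y ω) cd.1 cd.2 hd2
    have h1 : S.E (fun ω => max (min |X ω + Y ω| cd.2 - cd.1) 0) ≤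
        S.E (fun ω => max (min |X ω| cd.2 - cd.1 / 2) 0
          + max (min |Y ω| cd.2 - cd.1 / 2) 0) :=
      S.mono _ (S.mem_g hXYH cd.1 cd.2) _
        (S.mem_add (S.mem_g hX.1 (cd.1 / 2) cd.2) (S.mem_g hY.1 (cd.1 / 2) cd.2)) hpt
    have h2 := S.subadd _ (S.mem_g hX.1 (cd.1 / 2) cd.2) _ (S.mem_g hY.1 (cd.1 / 2) cd.2)
    exact le_trans h1 h2

end SLE


/-- for every `X ∈ H₁` the truncated limit `Ê[X]` exists and is finite,
and `Ê` is a sub-linear expectation on `H₁`. -/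
theorem sublinear_EHat_on_H1 {Ω : Type*} (S : SLE Ω) :
    (∀ X ∈ S.H1, Tendsto (fun c : ℝ => S.E (SLE.trunc X c)) atTop (nhds (S.EHat X))) ∧
    (∀ X ∈ S.H1, ∀ Y ∈ S.H1, (∀ ω, X ω ≤ Y ω) → S.EHat X ≤ S.EHat Y) ∧
    (∀ c : ℝ, S.EHat (fun _ => c) = c) ∧
    (∀ X ∈ S.H1, ∀ Y ∈ S.H1, S.EHat (fun ω => X ω + Y ω) ≤ S.EHat X + S.EHat Y) ∧
    (∀ X ∈ S.H1, ∀ l : ℝ, 0 ≤ l → S.EHat (fun ω => l * X ω) = l * S.EHat X) := by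
  refine ⟨fun X hX => S.tendsto_EHat hX, ?_, ?_, ?_, ?_⟩
  · -- monotonicity
    intro X hX Y hY hXY
    refine le_of_tendsto_of_tendsto' (S.tendsto_EHat hX) (S.tendsto_EHat hY) (fun c => ?_)
    refine S.mono _ (S.mem_trunc hX.1 c) _ (S.mem_trunc hY.1 c) (fun ω => ?_)
    exact max_le_max le_rfl (min_le_min (hXY ω) le_rfl)
  · -- constants
    intro k
    have ht : Tendsto (fun c : ℝ => S.E (SLE.trunc (fun _ : Ω => k) c)) atTop (nhds k) := by
      have he : (fun c : ℝ => S.E (SLE.trunc (fun _ : Ω => k) c)) =ᶠ[atTop]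
          fun _ => k := by
        filter_upwards [eventually_ge_atTop |k|] with c hc
        have h1 : SLE.trunc (fun _ : Ω => k) c = fun _ => k := by
          funext ω; unfold SLE.trunc
          rw [min_eq_left ((le_abs_self k).trans hc),
            max_eq_right (by linarith [neg_abs_le k])]
        rw [h1, S.const]
      exact Tendsto.congr' he.symm tendsto_const_nhds
    exact ht.limUnder_eq
  · -- subadditivity
    intro X hX Y hY
    have hXY : (fun ω => X ω + Y ω) ∈ S.H1 := S.H1_add hX hY
    have hm : Tendsto (fun c : ℝ => ((c / 2, c) : ℝ × ℝ)) atTop (atTop ×ˢ atTop) :=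
      (tendsto_id.atTop_div_const two_pos).prodMk tendsto_id
    have hgX : Tendsto (fun c : ℝ => S.E (fun ω => max (min |X ω| c - c / 2) 0))
        atTop (nhds 0) := hX.2.comp hm
    have hgY : Tendsto (fun c : ℝ => S.E (fun ω => max (min |Y ω| c - c / 2) 0))
        atTop (nhds 0) := hY.2.comp hm
    have hRHS : Tendsto (fun c : ℝ => S.E (SLE.trunc X c) + S.E (SLE.trunc Y c)
        + S.E (fun ω => max (min |X ω| c - c / 2) 0)
        + S.E (fun ω => max (min |Y ω| c - c / 2) 0)) atTop
        (nhds (S.EHat X + S.EHat Y)) := by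
      have := (((S.tendsto_EHat hX).add (S.tendsto_EHat hY)).add hgX).add hgY
      simpa using this
    refine le_of_tendsto_of_tendsto (S.tendsto_EHat hXY) hRHS ?_
    filter_upwards [eventually_ge_atTop (0 : ℝ)] with c hc
    have hpt : ∀ ω, SLE.trunc (fun ω => X ω + Y ω) c ω ≤
        SLE.trunc X c ω + SLE.trunc Y c ω + max (min |X ω| c - c / 2) 0
          + max (min |Y ω| c - c / 2) 0 :=
      fun ω => truncR_add (X ω) (Y ω) c hc
    have m1 := S.mem_trunc hX.1 c
    have m2 := S.mem_trunc hY.1 c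
    have mg1 := S.mem_g hX.1 (c / 2) c
    have mg2 := S.mem_g hY.1 (c / 2) c
    have mem2 : (fun ω => SLE.trunc X c ω + SLE.trunc Y c ω) ∈ S.H := S.mem_add m1 m2
    have mem3 : (fun ω => SLE.trunc X c ω + SLE.trunc Y c ω
        + max (min |X ω| c - c / 2) 0) ∈ S.H := S.mem_add mem2 mg1
    have mem4 : (fun ω => SLE.trunc X c ω + SLE.trunc Y c ω
        + max (min |X ω| c - c / 2) 0 + max (min |Y ω| c - c / 2) 0) ∈ S.H :=
      S.mem_add mem3 mg2
    have step1 : S.E (SLE.trunc (fun ω => X ω + Y ω) c) ≤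
        S.E (fun ω => SLE.trunc X c ω + SLE.trunc Y c ω
          + max (min |X ω| c - c / 2) 0 + max (min |Y ω| c - c / 2) 0) :=
      S.mono _ (S.mem_trunc hXY.1 c) _ mem4 hpt
    have step2 := S.subadd _ mem3 _ mg2
    have step3 := S.subadd _ mem2 _ mg1
    have step4 := S.subadd _ m1 _ m2
    beta_reduce at step1 step2 step3 step4 ⊢
    linarith
  · -- positive homogeneity
    intro X hX l hl
    rcases eq_or_lt_of_le hl with rfl | hl
    · have ht : Tendsto (fun c : ℝ => S.E (SLE.trunc (fun ω => 0 * X ω) c)) atTop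
          (nhds 0) := by
        have he : (fun c : ℝ => S.E (SLE.trunc (fun ω => 0 * X ω) c)) =ᶠ[atTop]
            fun _ => 0 := by
          filter_upwards [eventually_ge_atTop (0 : ℝ)] with c hc
          have h1 : SLE.trunc (fun ω : Ω => 0 * X ω) c = fun _ => 0 := by
            funext ω; unfold SLE.trunc
            show max (-c) (min (0 * X ω) c) = 0
            rw [zero_mul, min_eq_left hc, max_eq_right (by linarith)]
          rw [h1, S.const]
        exact Tendsto.congr' he.symm tendsto_const_nhds
      rw [zero_mul]
      exact ht.limUnder_eq
    · have hscale : ∀ c : ℝ, S.E (SLE.trunc (fun ω => l * X ω) c) =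
          l * S.E (SLE.trunc X (c / l)) := by
        intro c
        have h1 : SLE.trunc (fun ω => l * X ω) c =
            fun ω => l * SLE.trunc X (c / l) ω := by
          funext ω; unfold SLE.trunc
          rw [mul_max_of_nonneg _ _ hl.le, mul_min_of_nonneg _ _ hl.le,
            mul_div_cancel₀ c (ne_of_gt hl), mul_neg, mul_div_cancel₀ c (ne_of_gt hl)]
        rw [h1]
        exact S.poshomog _ (S.mem_trunc hX.1 _) l hl.le
      have h3 : Tendsto (fun c : ℝ => S.E (SLE.trunc X (c / l))) atTop
          (nhds (S.EHat X)) :=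
        (S.tendsto_EHat hX).comp (tendsto_id.atTop_div_const hl)
      have ht : Tendsto (fun c : ℝ => S.E (SLE.trunc (fun ω => l * X ω) c)) atTop
          (nhds (l * S.EHat X)) :=
        Tendsto.congr (fun c => (hscale c).symm) (h3.const_mul l)
      exact ht.limUnder_eq
end
end

section
/- Let V₁ be a capacity on a sub-linear expectation space (Ω₁, H₁, E₁) and V₂ a capacity on (Ω₂, H₂, E₂), each satisfying E_i[f] ≤ V_i(A) ≤ E_i[g] whenever 0 ≤ f ≤ I_A ≤ g with f, g in the respective H_i. If X ∈ H₁ and Y ∈ H₂ are identically distributed, i.e. E₁[φ(X)] = E₂[φ(Y)] for all bounded Lipschitz φ: ℝ → ℝ, then for every ε > 0 and every x ∈ ℝ: V₁(X ≥ x + ε) ≤ V₂(Y ≥ x) ≤ V₁(X ≥ x − ε). Consequently V₁(X ≥ x) = V₂(Y ≥ x) for all but at most countably many x, and the Choquet integrals agree: C_{V₁}(X) = C_{V₂}(Y). -/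
open Filter MeasureTheory Set
open scoped ENNReal

noncomputable section

/-- The Choquet integral `C_V(X) = ∫₀^∞ V(X ≥ t) dt + ∫_{-∞}^0 (V(X ≥ t) - 1) dt`. -/
def choquet {Ω : Type*} (V : Set Ω → ℝ) (X : Ω → ℝ) : ℝ :=
  (∫ t in Set.Ioi (0 : ℝ), V {ω | t ≤ X ω}) +
    ∫ t in Set.Iio (0 : ℝ), (V {ω | t ≤ X ω} - 1)


/-- Auxiliary clamp function: `0` below `a`, `1` above `b`, linear in between. -/
noncomputable def clampAB (a b : ℝ) : ℝ → ℝ := fun t => min (max ((b - a)⁻¹ * (t - a)) 0) 1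

lemma clamp_lip (a b : ℝ) : ∃ K, LipschitzWith K (clampAB a b) := by
  refine ⟨‖(b - a)⁻¹‖₊, ?_⟩
  have h1 : LipschitzWith 1 (fun t : ℝ => t - a) :=
    LipschitzWith.of_dist_le_mul (fun x y => by simp [Real.dist_eq])
  have h2 : LipschitzWith ‖(b - a)⁻¹‖₊ (fun t : ℝ => (b - a)⁻¹ * (t - a)) := by
    have := (lipschitzWith_smul (β := ℝ) ((b - a)⁻¹)).comp h1
    rw [mul_one] at this
    exact this
  exact (h2.max_const 0).min_const 1

lemma clamp_nonneg (a b : ℝ) (t : ℝ) : 0 ≤ clampAB a b t := le_min (le_max_right _ _) zero_le_one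

lemma clamp_le_one (a b : ℝ) (t : ℝ) : clampAB a b t ≤ 1 := min_le_right _ _

lemma clamp_abs (a b : ℝ) (t : ℝ) : |clampAB a b t| ≤ 1 := by
  rw [abs_le]; exact ⟨by linarith [clamp_nonneg a b t], clamp_le_one a b t⟩

lemma clamp_eq_zero (a b : ℝ) {t : ℝ} (hab : a ≤ b) (ht : t ≤ a) : clampAB a b t = 0 := by
  have : (b - a)⁻¹ * (t - a) ≤ 0 :=
    mul_nonpos_of_nonneg_of_nonpos (inv_nonneg.2 (by linarith)) (by linarith)
  simp [clampAB, max_eq_right this]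

lemma clamp_one_le (a b : ℝ) {t : ℝ} (hab : a < b) (ht : b ≤ t) : 1 ≤ clampAB a b t := by
  have hba : 0 < b - a := by linarith
  have : (1 : ℝ) ≤ (b - a)⁻¹ * (t - a) := by
    rw [le_inv_mul_iff₀ hba]; linarith
  exact le_min (le_max_of_le_left this) le_rfl

lemma mem_comp_blip {Ω : Type*} (S : SLE Ω) {X : Ω → ℝ} (hX : X ∈ S.H) {φ : ℝ → ℝ}
    (hφ : ∃ K, LipschitzWith K φ) : (fun ω => φ (X ω)) ∈ S.H := by
  obtain ⟨K, hK⟩ := hφ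
  exact S.comp_mem 1 (fun _ => X) (fun _ => hX) (fun p => φ (p 0))
    ((hK.comp (LipschitzWith.eval 0)).locallyLipschitz)

/-- comparison of capacities of identically distributed random variables
and equality of their Choquet integrals. -/
theorem capacity_comparison_identDist {Ω₁ Ω₂ : Type*} (S₁ : SLE Ω₁) (S₂ : SLE Ω₂)
    (V₁ : Set Ω₁ → ℝ) (V₂ : Set Ω₂ → ℝ)
    (hV₁ : ∀ (A : Set Ω₁) (f g : Ω₁ → ℝ), f ∈ S₁.H → g ∈ S₁.H →
      (∀ ω, 0 ≤ f ω) → (∀ ω ∈ A, f ω ≤ 1) → (∀ ω ∉ A, f ω ≤ 0) →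
      (∀ ω, 0 ≤ g ω) → (∀ ω ∈ A, (1 : ℝ) ≤ g ω) →
      S₁.E f ≤ V₁ A ∧ V₁ A ≤ S₁.E g)
    (hV₂ : ∀ (A : Set Ω₂) (f g : Ω₂ → ℝ), f ∈ S₂.H → g ∈ S₂.H →
      (∀ ω, 0 ≤ f ω) → (∀ ω ∈ A, f ω ≤ 1) → (∀ ω ∉ A, f ω ≤ 0) →
      (∀ ω, 0 ≤ g ω) → (∀ ω ∈ A, (1 : ℝ) ≤ g ω) →
      S₂.E f ≤ V₂ A ∧ V₂ A ≤ S₂.E g)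
    (X : Ω₁ → ℝ) (Y : Ω₂ → ℝ) (hX : X ∈ S₁.H) (hY : Y ∈ S₂.H)
    (hid : ∀ φ : ℝ → ℝ, SLE.BLip φ →
      S₁.E (fun ω => φ (X ω)) = S₂.E (fun ω => φ (Y ω))) :
    (∀ ε > 0, ∀ x : ℝ,
      V₁ {ω | x + ε ≤ X ω} ≤ V₂ {ω | x ≤ Y ω} ∧
      V₂ {ω | x ≤ Y ω} ≤ V₁ {ω | x - ε ≤ X ω}) ∧
    Set.Countable {x : ℝ | V₁ {ω | x ≤ X ω} ≠ V₂ {ω | x ≤ Y ω}} ∧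
    choquet V₁ X = choquet V₂ Y := by
  have key : ∀ ε > 0, ∀ x : ℝ,
      V₁ {ω | x + ε ≤ X ω} ≤ V₂ {ω | x ≤ Y ω} ∧
      V₂ {ω | x ≤ Y ω} ≤ V₁ {ω | x - ε ≤ X ω} := by
    intro ε hε x
    have hx1 : x < x + ε := by linarith
    have hx2 : x - ε < x := by linarith
    have hφ₁lip := clamp_lip x (x + ε)
    have hφ₂lip := clamp_lip (x - ε) x
    have hm1X : (fun ω => clampAB x (x + ε) (X ω)) ∈ S₁.H := mem_comp_blip S₁ hX hφ₁lip
    have hm1Y : (fun ω => clampAB x (x + ε) (Y ω)) ∈ S₂.H := mem_comp_blip S₂ hY hφ₁lip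
    have hm2X : (fun ω => clampAB (x - ε) x (X ω)) ∈ S₁.H := mem_comp_blip S₁ hX hφ₂lip
    have hm2Y : (fun ω => clampAB (x - ε) x (Y ω)) ∈ S₂.H := mem_comp_blip S₂ hY hφ₂lip
    have hid1 := hid (clampAB x (x + ε)) ⟨hφ₁lip, 1, clamp_abs _ _⟩
    have hid2 := hid (clampAB (x - ε) x) ⟨hφ₂lip, 1, clamp_abs _ _⟩
    constructor
    · have hA : V₁ {ω | x + ε ≤ X ω} ≤ S₁.E (fun ω => clampAB x (x + ε) (X ω)) :=
        (hV₁ {ω | x + ε ≤ X ω} (fun _ => 0) (fun ω => clampAB x (x + ε) (X ω))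
          (S₁.const_mem 0) hm1X (fun _ => le_rfl) (fun _ _ => zero_le_one)
          (fun _ _ => le_rfl) (fun ω => clamp_nonneg _ _ _)
          (fun ω hω => clamp_one_le _ _ hx1 hω)).2
      have hB : S₂.E (fun ω => clampAB x (x + ε) (Y ω)) ≤ V₂ {ω | x ≤ Y ω} :=
        (hV₂ {ω | x ≤ Y ω} (fun ω => clampAB x (x + ε) (Y ω)) (fun _ => 1)
          hm1Y (S₂.const_mem 1) (fun ω => clamp_nonneg _ _ _)
          (fun ω _ => clamp_le_one _ _ _)
          (fun ω hω => le_of_eq (clamp_eq_zero _ _ hx1.le (le_of_not_ge hω)))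
          (fun _ => zero_le_one) (fun _ _ => le_rfl)).1
      calc V₁ {ω | x + ε ≤ X ω} ≤ S₁.E (fun ω => clampAB x (x + ε) (X ω)) := hA
        _ = S₂.E (fun ω => clampAB x (x + ε) (Y ω)) := hid1
        _ ≤ V₂ {ω | x ≤ Y ω} := hB
    · have hC : V₂ {ω | x ≤ Y ω} ≤ S₂.E (fun ω => clampAB (x - ε) x (Y ω)) :=
        (hV₂ {ω | x ≤ Y ω} (fun _ => 0) (fun ω => clampAB (x - ε) x (Y ω))
          (S₂.const_mem 0) hm2Y (fun _ => le_rfl) (fun _ _ => zero_le_one)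
          (fun _ _ => le_rfl) (fun ω => clamp_nonneg _ _ _)
          (fun ω hω => clamp_one_le _ _ hx2 hω)).2
      have hD : S₁.E (fun ω => clampAB (x - ε) x (X ω)) ≤ V₁ {ω | x - ε ≤ X ω} :=
        (hV₁ {ω | x - ε ≤ X ω} (fun ω => clampAB (x - ε) x (X ω)) (fun _ => 1)
          hm2X (S₁.const_mem 1) (fun ω => clamp_nonneg _ _ _)
          (fun ω _ => clamp_le_one _ _ _)
          (fun ω hω => le_of_eq (clamp_eq_zero _ _ hx2.le (le_of_not_ge hω)))
          (fun _ => zero_le_one) (fun _ _ => le_rfl)).1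
      calc V₂ {ω | x ≤ Y ω} ≤ S₂.E (fun ω => clampAB (x - ε) x (Y ω)) := hC
        _ = S₁.E (fun ω => clampAB (x - ε) x (X ω)) := hid2.symm
        _ ≤ V₁ {ω | x - ε ≤ X ω} := hD
  have F₁anti : Antitone (fun x : ℝ => V₁ {ω | x ≤ X ω}) := by
    intro u v huv
    rcases eq_or_lt_of_le huv with rfl | h
    · exact le_rfl
    · have h1 := (key ((v - u) / 2) (by linarith) ((u + v) / 2)).1
      have h2 := (key ((v - u) / 2) (by linarith) ((u + v) / 2)).2
      have e1 : (u + v) / 2 + (v - u) / 2 = v := by ring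
      have e2 : (u + v) / 2 - (v - u) / 2 = u := by ring
      rw [e1] at h1; rw [e2] at h2
      exact h1.trans h2
  have heqcont : ∀ x : ℝ, ContinuousAt (fun x : ℝ => V₁ {ω | x ≤ X ω}) x →
      V₁ {ω | x ≤ X ω} = V₂ {ω | x ≤ Y ω} := by
    intro x hc
    have ht : Tendsto (fun ε : ℝ => x + ε) (nhdsWithin 0 (Ioi 0)) (nhds x) := by
      have h0 : Tendsto (fun ε : ℝ => x + ε) (nhds 0) (nhds (x + 0)) :=
        (continuous_const.add continuous_id).tendsto 0
      simpa using h0.mono_left nhdsWithin_le_nhds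
    have ht' : Tendsto (fun ε : ℝ => x - ε) (nhdsWithin 0 (Ioi 0)) (nhds x) := by
      have h0 : Tendsto (fun ε : ℝ => x - ε) (nhds 0) (nhds (x - 0)) :=
        (continuous_const.sub continuous_id).tendsto 0
      simpa using h0.mono_left nhdsWithin_le_nhds
    have l1 : Tendsto (fun ε : ℝ => V₁ {ω | x + ε ≤ X ω}) (nhdsWithin 0 (Ioi 0))
        (nhds (V₁ {ω | x ≤ X ω})) := hc.tendsto.comp ht
    have l2 : Tendsto (fun ε : ℝ => V₁ {ω | x - ε ≤ X ω}) (nhdsWithin 0 (Ioi 0))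
        (nhds (V₁ {ω | x ≤ X ω})) := hc.tendsto.comp ht'
    have hle : V₁ {ω | x ≤ X ω} ≤ V₂ {ω | x ≤ Y ω} :=
      le_of_tendsto l1 (eventually_nhdsWithin_of_forall fun ε hε => (key ε hε x).1)
    have hge : V₂ {ω | x ≤ Y ω} ≤ V₁ {ω | x ≤ X ω} :=
      ge_of_tendsto l2 (eventually_nhdsWithin_of_forall fun ε hε => (key ε hε x).2)
    exact le_antisymm hle hge
  have hcount : Set.Countable {x : ℝ | V₁ {ω | x ≤ X ω} ≠ V₂ {ω | x ≤ Y ω}} := by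
    apply F₁anti.countable_not_continuousAt.mono
    intro x hx hc
    exact hx (heqcont x hc)
  refine ⟨key, hcount, ?_⟩
  have hnull : volume {x : ℝ | V₁ {ω | x ≤ X ω} ≠ V₂ {ω | x ≤ Y ω}} = 0 :=
    hcount.measure_zero _
  have hae : ∀ᵐ x : ℝ, V₁ {ω | x ≤ X ω} = V₂ {ω | x ≤ Y ω} := by
    rw [ae_iff]; exact hnull
  unfold choquet
  congr 1
  · exact integral_congr_ae (ae_restrict_of_ae hae)
  · exact integral_congr_ae (ae_restrict_of_ae (hae.mono fun x hx => by simp only [hx]))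
end
end

section
/- Let {X_n} be independent random variables in a sub-linear expectation space (Ω, H, E) with capacity V satisfying E[f] ≤ V(A) ≤ E[g] for 0 ≤ f ≤ I_A ≤ g, and suppose E is expressed as a supremum over a family P of probability measures with V^P(A) = sup_{P∈P} P(A) and v = 1 − V^P. If Σ_{n=1}^∞ v(X_n < 1) < ∞ and the family P is countable-dimensionally weakly compact, then V^P(⋃_{m=1}^∞ ⋂_{i=m}^∞ {X_i ≥ 1}) = 1; i.e., the complement of {X_i < 1 infinitely often} has full capacity. -/
open Filter MeasureTheory Set
open scoped ENNReal

noncomputable section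

/-- The capacity `V^P(A) = sup_{P ∈ Ps} P(A)` generated by a family of probability measures. -/
def VP {Ω : Type*} [MeasurableSpace Ω] (Ps : Set (Measure Ω)) (A : Set Ω) : ℝ :=
  sSup ((fun P : Measure Ω => (P A).toReal) '' Ps)


lemma BC_prod_mem_Icc {ι : Type*} (s : Finset ι) (u : ι → ℝ)
    (hu : ∀ i ∈ s, u i ∈ Set.Icc (0:ℝ) 1) : (∏ i ∈ s, u i) ∈ Set.Icc (0:ℝ) 1 :=
  ⟨Finset.prod_nonneg fun i hi => (hu i hi).1,
   Finset.prod_le_one (fun i hi => (hu i hi).1) (fun i hi => (hu i hi).2)⟩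

lemma BC_abs_prod_sub_prod_le {ι : Type*} (s : Finset ι) (u v : ι → ℝ)
    (hu : ∀ i ∈ s, u i ∈ Set.Icc (0:ℝ) 1) (hv : ∀ i ∈ s, v i ∈ Set.Icc (0:ℝ) 1) :
    |∏ i ∈ s, u i - ∏ i ∈ s, v i| ≤ ∑ i ∈ s, |u i - v i| := by
  induction s using Finset.cons_induction with
  | empty => simp
  | cons a s ha ih =>
    simp only [Finset.prod_cons, Finset.sum_cons]
    have hu' : ∀ i ∈ s, u i ∈ Set.Icc (0:ℝ) 1 := fun i hi => hu i (Finset.mem_cons_of_mem hi)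
    have hv' : ∀ i ∈ s, v i ∈ Set.Icc (0:ℝ) 1 := fun i hi => hv i (Finset.mem_cons_of_mem hi)
    have hU := BC_prod_mem_Icc s u hu'
    have hva := hv a (Finset.mem_cons_self a s)
    have key : |u a * ∏ i ∈ s, u i - v a * ∏ i ∈ s, v i| ≤
        |u a - v a| * |∏ i ∈ s, u i| + |v a| * |∏ i ∈ s, u i - ∏ i ∈ s, v i| := by
      have : u a * ∏ i ∈ s, u i - v a * ∏ i ∈ s, v i =
          (u a - v a) * (∏ i ∈ s, u i) + v a * (∏ i ∈ s, u i - ∏ i ∈ s, v i) := by ring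
      rw [this]
      exact (abs_add_le _ _).trans (by rw [abs_mul, abs_mul])
    have h1 : |∏ i ∈ s, u i| ≤ 1 := abs_le.2 ⟨by linarith [hU.1], hU.2⟩
    have h2 : |v a| ≤ 1 := abs_le.2 ⟨by linarith [hva.1], hva.2⟩
    calc |u a * ∏ i ∈ s, u i - v a * ∏ i ∈ s, v i|
        ≤ |u a - v a| * |∏ i ∈ s, u i| + |v a| * |∏ i ∈ s, u i - ∏ i ∈ s, v i| := key
      _ ≤ |u a - v a| + ∑ i ∈ s, |u i - v i| := by
          have t1 : |u a - v a| * |∏ i ∈ s, u i| ≤ |u a - v a| :=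
            mul_le_of_le_one_right (abs_nonneg _) h1
          have t2 : |v a| * |∏ i ∈ s, u i - ∏ i ∈ s, v i| ≤ ∑ i ∈ s, |u i - v i| :=
            (mul_le_of_le_one_left (abs_nonneg _) h2).trans (ih hu' hv')
          linarith

lemma BC_one_sub_sum_le_prod {ι : Type*} (s : Finset ι) (u : ι → ℝ)
    (hu : ∀ i ∈ s, u i ∈ Set.Icc (0:ℝ) 1) :
    1 - ∑ i ∈ s, (1 - u i) ≤ ∏ i ∈ s, u i := by
  induction s using Finset.cons_induction with
  | empty => simp
  | cons a s ha ih =>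
    simp only [Finset.prod_cons, Finset.sum_cons]
    have hu' : ∀ i ∈ s, u i ∈ Set.Icc (0:ℝ) 1 := fun i hi => hu i (Finset.mem_cons_of_mem hi)
    have hua := hu a (Finset.mem_cons_self a s)
    have hU := BC_prod_mem_Icc s u hu'
    have hih := ih hu'
    nlinarith [hU.1, hU.2, hua.1, hua.2]

noncomputable section

/-- Lipschitz approximation from below-ish: `0` on `(-∞, 1-δ]`, `1` on `[1, ∞)`. -/
def BChfun (δ : ℝ) (x : ℝ) : ℝ := min 1 (max ((x - (1 - δ)) / δ) 0)

lemma BChfun_mem_Icc (δ x : ℝ) : BChfun δ x ∈ Set.Icc (0:ℝ) 1 := by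
  unfold BChfun
  constructor
  · exact le_min one_pos.le (le_max_right _ _)
  · exact min_le_left _ _

lemma BChfun_eq_one {δ x : ℝ} (hδ : 0 < δ) (hx : 1 ≤ x) : BChfun δ x = 1 := by
  unfold BChfun
  have h1 : (1:ℝ) ≤ (x - (1 - δ)) / δ := by
    rw [le_div_iff₀ hδ]; linarith
  have : (1:ℝ) ≤ max ((x - (1 - δ)) / δ) 0 := h1.trans (le_max_left _ _)
  exact min_eq_left this

lemma BChfun_eq_zero {δ x : ℝ} (hδ : 0 < δ) (hx : x ≤ 1 - δ) : BChfun δ x = 0 := by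
  unfold BChfun
  have h1 : (x - (1 - δ)) / δ ≤ 0 := div_nonpos_iff.2 (Or.inr ⟨by linarith, hδ.le⟩)
  rw [max_eq_right h1]
  exact min_eq_right zero_le_one

lemma BChfun_mono_delta {δ δ' x : ℝ} (hδ : 0 < δ) (h : δ ≤ δ') : BChfun δ x ≤ BChfun δ' x := by
  have hδ' : 0 < δ' := lt_of_lt_of_le hδ h
  rcases le_or_gt 1 x with hx | hx
  · rw [BChfun_eq_one hδ hx, BChfun_eq_one hδ' hx]
  · have key : (x - (1 - δ)) / δ ≤ (x - (1 - δ')) / δ' := by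
      rw [div_le_div_iff₀ hδ hδ']
      nlinarith
    exact min_le_min le_rfl (max_le_max key le_rfl)

lemma BChfun_lipschitz {δ : ℝ} (hδ : 0 < δ) : LipschitzWith (Real.toNNReal δ⁻¹) (BChfun δ) := by
  have l1 : LipschitzWith (Real.toNNReal δ⁻¹) (fun x : ℝ => (x - (1 - δ)) / δ) := by
    apply LipschitzWith.of_dist_le_mul
    intro x y
    rw [Real.dist_eq, Real.dist_eq, Real.coe_toNNReal _ (by positivity)]
    rw [div_sub_div_same]
    rw [abs_div, abs_of_pos hδ]
    have : x - (1 - δ) - (y - (1 - δ)) = x - y := by ring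
    rw [this, div_eq_inv_mul]
  exact (l1.max_const 0).const_min 1

lemma BChfun_abs_sub {δ : ℝ} (hδ : 0 < δ) (x y : ℝ) :
    |BChfun δ x - BChfun δ y| ≤ δ⁻¹ * |x - y| := by
  have := (BChfun_lipschitz hδ).dist_le_mul x y
  rwa [Real.dist_eq, Real.dist_eq, Real.coe_toNNReal _ (by positivity)] at this

/-- clamp to [-2,2] -/
def BCclamp (x : ℝ) : ℝ := max (-2) (min x 2)

lemma BCclamp_lipschitz : LipschitzWith 1 BCclamp :=
  (LipschitzWith.id.min_const 2).const_max (-2)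

lemma BChfun_clamp {δ : ℝ} (hδ : 0 < δ) (hδ1 : δ ≤ 1) (x : ℝ) :
    BChfun δ (BCclamp x) = BChfun δ x := by
  unfold BCclamp
  rcases le_or_gt x (-2) with h | h
  · rw [min_eq_left (by linarith : x ≤ (2:ℝ)), max_eq_left (by linarith : x ≤ (-2:ℝ))]
    rw [BChfun_eq_zero hδ (by linarith), BChfun_eq_zero hδ (by linarith)]
  · rcases le_or_gt x 2 with h2 | h2
    · rw [min_eq_left h2, max_eq_right (by linarith)]
    · rw [min_eq_right h2.le, max_eq_right (by norm_num : (-2:ℝ) ≤ 2)]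
      rw [BChfun_eq_one hδ (by linarith), BChfun_eq_one hδ (by linarith)]

lemma BC_lip_of_abs {g : ℝ → ℝ} {K : ℝ} (hlip : ∀ x y, |g x - g y| ≤ K * |x - y|) :
    LipschitzWith (Real.toNNReal K) g := by
  apply LipschitzWith.of_dist_le_mul
  intro x y
  rw [Real.dist_eq, Real.dist_eq]
  refine (hlip x y).trans ?_
  gcongr
  exact Real.le_coe_toNNReal K

lemma BC_lip_pi (n : ℕ) (g : ℕ → ℝ → ℝ) (K : ℝ) (hK : 0 ≤ K)
    (hlip : ∀ i x y, |g i x - g i y| ≤ K * |x - y|)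
    (hb : ∀ i x, g i x ∈ Set.Icc (0:ℝ) 1) :
    LipschitzWith (Real.toNNReal (n * K)) (fun y : Fin n → ℝ => ∏ i : Fin n, g ↑i (y i)) := by
  apply LipschitzWith.of_dist_le_mul
  intro y y'
  rw [Real.dist_eq, Real.coe_toNNReal _ (by positivity)]
  calc |(∏ i : Fin n, g ↑i (y i)) - ∏ i : Fin n, g ↑i (y' i)|
      ≤ ∑ i : Fin n, |g ↑i (y i) - g ↑i (y' i)| :=
        BC_abs_prod_sub_prod_le _ _ _ (fun i _ => hb i _) (fun i _ => hb i _)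
    _ ≤ ∑ _i : Fin n, K * dist y y' := by
        refine Finset.sum_le_sum fun i _ => (hlip i _ _).trans ?_
        have := dist_le_pi_dist y y' i
        rw [Real.dist_eq] at this
        exact mul_le_mul_of_nonneg_left this hK
    _ = n * K * dist y y' := by
        rw [Finset.sum_const, Finset.card_univ, Fintype.card_fin, nsmul_eq_mul]; ring

lemma BC_lip_pair (n : ℕ) (g : ℕ → ℝ → ℝ) (K : ℝ) (hK : 0 ≤ K)
    (hlip : ∀ i x y, |g i x - g i y| ≤ K * |x - y|)
    (hb : ∀ i x, g i x ∈ Set.Icc (0:ℝ) 1) :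
    LipschitzWith (Real.toNNReal ((n + 1) * K))
      (fun p : (Fin n → ℝ) × ℝ => (∏ i : Fin n, g ↑i (p.1 i)) * g n p.2) := by
  apply LipschitzWith.of_dist_le_mul
  intro p q
  rw [Real.dist_eq, Real.coe_toNNReal _ (by positivity)]
  set A := ∏ i : Fin n, g ↑i (p.1 i) with hA
  set C := ∏ i : Fin n, g ↑i (q.1 i) with hC
  have hAm : A ∈ Set.Icc (0:ℝ) 1 := BC_prod_mem_Icc _ _ (fun i _ => hb i _)
  have hCm : C ∈ Set.Icc (0:ℝ) 1 := BC_prod_mem_Icc _ _ (fun i _ => hb i _)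
  have hbp := hb n p.2
  have hbq := hb n q.2
  have hd1 : dist p.1 q.1 ≤ dist p q := by rw [Prod.dist_eq]; exact le_max_left _ _
  have hd2 : dist p.2 q.2 ≤ dist p q := by rw [Prod.dist_eq]; exact le_max_right _ _
  have hAC : |A - C| ≤ n * K * dist p q := by
    calc |A - C| ≤ ∑ i : Fin n, |g ↑i (p.1 i) - g ↑i (q.1 i)| :=
          BC_abs_prod_sub_prod_le _ _ _ (fun i _ => hb i _) (fun i _ => hb i _)
      _ ≤ ∑ _i : Fin n, K * dist p q := by
          refine Finset.sum_le_sum fun i _ => (hlip i _ _).trans ?_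
          have h1 := (dist_le_pi_dist p.1 q.1 i).trans hd1
          rw [Real.dist_eq] at h1
          exact mul_le_mul_of_nonneg_left h1 hK
      _ = n * K * dist p q := by
          rw [Finset.sum_const, Finset.card_univ, Fintype.card_fin, nsmul_eq_mul]; ring
  have hgn : |g n p.2 - g n q.2| ≤ K * dist p q := by
    refine (hlip n _ _).trans ?_
    rw [← Real.dist_eq]
    exact mul_le_mul_of_nonneg_left hd2 hK
  have decomp : A * g n p.2 - C * g n q.2 = (A - C) * g n p.2 + C * (g n p.2 - g n q.2) := by ring
  calc |A * g n p.2 - C * g n q.2|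
      ≤ |A - C| * |g n p.2| + |C| * |g n p.2 - g n q.2| := by
        rw [decomp]; exact (abs_add_le _ _).trans (by rw [abs_mul, abs_mul])
    _ ≤ |A - C| + |g n p.2 - g n q.2| := by
        have t1 : |A - C| * |g n p.2| ≤ |A - C| :=
          mul_le_of_le_one_right (abs_nonneg _) (abs_le.2 ⟨by linarith [hbp.1], hbp.2⟩)
        have t2 : |C| * |g n p.2 - g n q.2| ≤ |g n p.2 - g n q.2| :=
          mul_le_of_le_one_left (abs_nonneg _) (abs_le.2 ⟨by linarith [hCm.1], hCm.2⟩)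
        linarith
    _ ≤ (↑n + 1) * K * dist p q := by nlinarith [dist_nonneg (x := p) (y := q), hK]

lemma BC_comp1_mem {Ω : Type*} (S : SLE Ω) {X : Ω → ℝ} (hX : X ∈ S.H) {g : ℝ → ℝ}
    {K : NNReal} (hg : LipschitzWith K g) : (fun ω => g (X ω)) ∈ S.H := by
  have := S.comp_mem 1 (fun _ => X) (fun _ => hX) (fun v => g (v 0))
    ((hg.comp (LipschitzWith.eval 0)).locallyLipschitz)
  simpa using this

lemma BC_prodX_mem {Ω : Type*} (S : SLE Ω) (X : ℕ → Ω → ℝ) (hH : ∀ n, X n ∈ S.H)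
    (g : ℕ → ℝ → ℝ) (K : ℝ) (hK : 0 ≤ K)
    (hlip : ∀ i x y, |g i x - g i y| ≤ K * |x - y|)
    (hb : ∀ i x, g i x ∈ Set.Icc (0:ℝ) 1) (n : ℕ) :
    (fun ω => ∏ i ∈ Finset.range n, g i (X i ω)) ∈ S.H := by
  have := S.comp_mem n (fun i => X i) (fun i => hH i) (fun y => ∏ i : Fin n, g ↑i (y i))
    ((BC_lip_pi n g K hK hlip hb).locallyLipschitz)
  convert this using 1
  funext ω
  show ∏ i ∈ Finset.range n, g i (X i ω) = ∏ i : Fin n, g ↑i (X ↑i ω)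
  exact (Fin.prod_univ_eq_prod_range (fun i => g i (X i ω)) n).symm

lemma BC_E_nonneg {Ω : Type*} (S : SLE Ω) {Z : Ω → ℝ} (hZ : Z ∈ S.H) (h0 : ∀ ω, 0 ≤ Z ω) :
    0 ≤ S.E Z := by
  have h := S.mono _ (S.const_mem 0) _ hZ (fun ω => h0 ω)
  rw [S.const 0] at h
  exact h

lemma BC_E_le_one {Ω : Type*} (S : SLE Ω) {Z : Ω → ℝ} (hZ : Z ∈ S.H) (h1 : ∀ ω, Z ω ≤ 1) :
    S.E Z ≤ 1 := by
  have h := S.mono _ hZ _ (S.const_mem 1) (fun ω => h1 ω)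
  rw [S.const 1] at h
  exact h

lemma BC_E_prod {Ω : Type*} (S : SLE Ω) (X : ℕ → Ω → ℝ) (hH : ∀ n, X n ∈ S.H)
    (hindep : S.Indep X) (g : ℕ → ℝ → ℝ) (K : ℝ) (hK : 0 ≤ K)
    (hlip : ∀ i x y, |g i x - g i y| ≤ K * |x - y|)
    (hb : ∀ i x, g i x ∈ Set.Icc (0:ℝ) 1) :
    ∀ n, S.E (fun ω => ∏ i ∈ Finset.range n, g i (X i ω)) =
      ∏ i ∈ Finset.range n, S.E (fun ω => g i (X i ω)) := by
  intro n
  induction n with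
  | zero => simpa using S.const 1
  | succ n ih =>
    have hgn : (fun ω => g n (X n ω)) ∈ S.H :=
      BC_comp1_mem S (hH n) (BC_lip_of_abs (hlip n))
    have hEn0 : 0 ≤ S.E (fun ω => g n (X n ω)) :=
      BC_E_nonneg S hgn (fun ω => (hb n _).1)
    have hprodmem : (fun ω => ∏ i ∈ Finset.range n, g i (X i ω)) ∈ S.H :=
      BC_prodX_mem S X hH g K hK hlip hb n
    have hφbd : ∀ (a : Fin n → ℝ) (b : ℝ),
        |(∏ i : Fin n, g ↑i (a i)) * g n b| ≤ 1 := by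
      intro a b
      have hA := BC_prod_mem_Icc Finset.univ (fun i : Fin n => g ↑i (a i)) (fun i _ => hb _ _)
      have hB := hb n b
      rw [abs_mul]
      exact mul_le_one₀ (abs_le.2 ⟨by linarith [hA.1], hA.2⟩) (abs_nonneg _)
        (abs_le.2 ⟨by linarith [hB.1], hB.2⟩)
    have hind := hindep n (fun a b => (∏ i : Fin n, g ↑i (a i)) * g n b)
      ⟨_, BC_lip_pair n g K hK hlip hb⟩ ⟨1, hφbd⟩
    have eL : (fun ω => ∏ i ∈ Finset.range (n+1), g i (X i ω)) =
        (fun ω => (∏ i : Fin n, g ↑i (X ↑i ω)) * g n (X n ω)) := by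
      funext ω
      rw [Finset.prod_range_succ, Fin.prod_univ_eq_prod_range (fun i => g i (X i ω)) n]
    have eR : (fun ω => S.E (fun ω' => (∏ i : Fin n, g ↑i (X ↑i ω)) * g n (X n ω'))) =
        (fun ω => S.E (fun ω'' => g n (X n ω'')) * ∏ i ∈ Finset.range n, g i (X i ω)) := by
      funext ω
      have hc : 0 ≤ ∏ i : Fin n, g ↑i (X ↑i ω) :=
        (BC_prod_mem_Icc Finset.univ _ (fun i _ => hb _ _)).1
      rw [S.poshomog _ hgn _ hc, Fin.prod_univ_eq_prod_range (fun i => g i (X i ω)) n]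
      ring
    calc S.E (fun ω => ∏ i ∈ Finset.range (n+1), g i (X i ω))
        = S.E (fun ω => S.E (fun ω' => (∏ i : Fin n, g ↑i (X ↑i ω)) * g n (X n ω'))) := by
          rw [eL]; exact hind
      _ = S.E (fun ω => S.E (fun ω'' => g n (X n ω'')) * ∏ i ∈ Finset.range n, g i (X i ω)) := by
          rw [eR]
      _ = S.E (fun ω'' => g n (X n ω'')) * S.E (fun ω => ∏ i ∈ Finset.range n, g i (X i ω)) :=
          S.poshomog _ hprodmem _ hEn0
      _ = ∏ i ∈ Finset.range (n+1), S.E (fun ω => g i (X i ω)) := by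
          rw [ih, Finset.prod_range_succ]; ring


/-- The test function used in the Borel–Cantelli argument. -/
def BCG (m : ℕ) (δ : ℝ) (i : ℕ) (x : ℝ) : ℝ := if m ≤ i then BChfun δ x else 1

lemma BCG_mem_Icc (m : ℕ) (δ : ℝ) (i : ℕ) (x : ℝ) : BCG m δ i x ∈ Set.Icc (0:ℝ) 1 := by
  unfold BCG; split
  · exact BChfun_mem_Icc δ x
  · norm_num

lemma BCG_lip (m : ℕ) {δ : ℝ} (hδ : 0 < δ) (i : ℕ) (x y : ℝ) :
    |BCG m δ i x - BCG m δ i y| ≤ δ⁻¹ * |x - y| := by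
  unfold BCG; split
  · exact BChfun_abs_sub hδ x y
  · simp only [sub_self, abs_zero]; positivity

lemma BCG_mono (m : ℕ) {δ δ' : ℝ} (hδ : 0 < δ) (h : δ ≤ δ') (i : ℕ) (x : ℝ) :
    BCG m δ i x ≤ BCG m δ' i x := by
  unfold BCG; split
  · exact BChfun_mono_delta hδ h
  · exact le_rfl

lemma BCG_clamp (m : ℕ) {δ : ℝ} (hδ : 0 < δ) (hδ1 : δ ≤ 1) (i : ℕ) (x : ℝ) :
    BCG m δ i (BCclamp x) = BCG m δ i x := by
  unfold BCG; split
  · exact BChfun_clamp hδ hδ1 x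
  · rfl

/-- first (direct) Borel–Cantelli type lemma under sub-linear expectation:
if `Σ v(Xₙ < 1) < ∞` then `V^P(⋃ₘ ⋂_{i ≥ m} {X_i ≥ 1}) = 1`. -/
theorem borel_cantelli_full_capacity {Ω : Type*} [MeasurableSpace Ω] (S : SLE Ω)
    (Ps : Set (MeasureTheory.Measure Ω))
    (hprob : ∀ P ∈ Ps, MeasureTheory.IsProbabilityMeasure P)
    (hrep : ∀ X ∈ S.H, (∃ M, ∀ ω, |X ω| ≤ M) →
      S.E X = sSup ((fun P : MeasureTheory.Measure Ω => ∫ ω, X ω ∂P) '' Ps))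
    (hcompact : ∀ Y : ℕ → Ω → ℝ, (∀ i, Y i ∈ S.H ∧ ∃ M, ∀ ω, |Y i ω| ≤ M) →
      ∀ Pseq : ℕ → MeasureTheory.Measure Ω, (∀ k, Pseq k ∈ Ps) →
      ∃ φ : ℕ → ℕ, StrictMono φ ∧ ∃ P ∈ Ps,
        ∀ (d : ℕ) (f : (Fin d → ℝ) → ℝ),
          (∃ K, LipschitzWith K f) → (∃ M, ∀ x, |f x| ≤ M) →
          Tendsto (fun k => ∫ ω, f (fun i : Fin d => Y i ω) ∂(Pseq (φ k))) atTop
            (nhds (∫ ω, f (fun i : Fin d => Y i ω) ∂P)))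
    (X : ℕ → Ω → ℝ) (hH : ∀ n, X n ∈ S.H) (hmeas : ∀ n, Measurable (X n))
    (hindep : S.Indep X)
    (hsum : Summable (fun n => 1 - VP Ps {ω | 1 ≤ X n ω})) :
    VP Ps (⋃ m : ℕ, ⋂ i : ℕ, ⋂ (_ : m ≤ i), {ω | 1 ≤ X i ω}) = 1 := by
  classical
  set A : Set Ω := ⋃ m : ℕ, ⋂ i : ℕ, ⋂ (_ : m ≤ i), {ω | 1 ≤ X i ω} with hAdef
  -- Ps is nonempty
  have hPs : Ps.Nonempty := by
    by_contra hne
    rw [Set.not_nonempty_iff_eq_empty] at hne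
    have h1 : ∀ n : ℕ, (1:ℝ) - VP Ps {ω | 1 ≤ X n ω} = 1 := by
      intro n; simp [VP, hne, Real.sSup_empty]
    have h2 : Summable (fun _ : ℕ => (1:ℝ)) := hsum.congr h1
    have h3 := h2.tendsto_atTop_zero
    exact one_ne_zero (tendsto_nhds_unique tendsto_const_nhds h3)
  -- probabilities are at most one
  have hPle1 : ∀ P ∈ Ps, ∀ B : Set Ω, ((P : Measure Ω) B).toReal ≤ 1 := by
    intro P hP B
    haveI := hprob P hP
    exact (ENNReal.toReal_mono ENNReal.one_ne_top prob_le_one).trans_eq ENNReal.toReal_one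
  have hbdd : ∀ B : Set Ω, BddAbove ((fun P : Measure Ω => (P B).toReal) '' Ps) := by
    intro B
    refine ⟨1, ?_⟩
    rintro r ⟨P, hP, rfl⟩
    exact hPle1 P hP B
  have hVle1 : ∀ B : Set Ω, VP Ps B ≤ 1 := by
    intro B
    refine csSup_le (hPs.image _) ?_
    rintro r ⟨P, hP, rfl⟩
    exact hPle1 P hP B
  -- integrability helper
  have hintg : ∀ P ∈ Ps, ∀ Z : Ω → ℝ, Measurable Z → (∀ ω, |Z ω| ≤ 1) →
      Integrable Z P := by
    intro P hP Z hZm hZb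
    haveI := hprob P hP
    exact (integrable_const (1:ℝ)).mono' hZm.aestronglyMeasurable
      (Filter.Eventually.of_forall fun ω => by simpa [Real.norm_eq_abs] using hZb ω)
  -- the key claim
  have key : ∀ ε : ℝ, 0 < ε → 1 - ε ≤ VP Ps A := by
    intro ε hε
    -- tail bound for the summable series
    obtain ⟨s, hs⟩ := hsum.vanishing (e := Set.Ioo (-(ε/2)) (ε/2))
      (Ioo_mem_nhds (by linarith) (by linarith))
    set m : ℕ := s.sup id + 1 with hm
    have htail : ∀ n : ℕ, ∑ i ∈ Finset.Ico m n, (1 - VP Ps {ω | 1 ≤ X i ω}) < ε/2 := by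
      intro n
      have hd : Disjoint (Finset.Ico m n) s := by
        rw [Finset.disjoint_left]
        intro i hi his
        have h1 : i ≤ s.sup id := Finset.le_sup (f := id) his
        have h2 := (Finset.mem_Ico.1 hi).1
        omega
      exact (hs _ hd).2
    -- lower bound for E[BChfun δ (X i)]
    have hEi : ∀ δ : ℝ, 0 < δ → ∀ i : ℕ,
        VP Ps {ω | 1 ≤ X i ω} ≤ S.E (fun ω => BChfun δ (X i ω)) := by
      intro δ hδ i
      have hmem : (fun ω => BChfun δ (X i ω)) ∈ S.H :=
        BC_comp1_mem S (hH i) (BChfun_lipschitz hδ)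
      have habs : ∀ ω, |BChfun δ (X i ω)| ≤ 1 := fun ω =>
        abs_le.2 ⟨by linarith [(BChfun_mem_Icc δ (X i ω)).1], (BChfun_mem_Icc δ (X i ω)).2⟩
      rw [hrep _ hmem ⟨1, habs⟩]
      have hBmeas : MeasurableSet {ω | 1 ≤ X i ω} := measurableSet_le measurable_const (hmeas i)
      have hbdd2 : BddAbove ((fun P : Measure Ω => ∫ ω, BChfun δ (X i ω) ∂P) '' Ps) := by
        refine ⟨1, ?_⟩
        rintro r ⟨P, hP, rfl⟩
        haveI := hprob P hP
        calc ∫ ω, BChfun δ (X i ω) ∂P ≤ ∫ _ω, (1:ℝ) ∂P := by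
              refine integral_mono (hintg P hP _ (((BChfun_lipschitz hδ).continuous.measurable).comp (hmeas i)) habs) (integrable_const 1) ?_
              intro ω
              exact (BChfun_mem_Icc δ (X i ω)).2
          _ = 1 := by simp
      refine csSup_le (hPs.image _) ?_
      rintro r ⟨P, hP, rfl⟩
      haveI := hprob P hP
      have hind : ∀ ω, Set.indicator {ω | 1 ≤ X i ω} (fun _ => (1:ℝ)) ω ≤ BChfun δ (X i ω) := by
        intro ω
        by_cases hω : ω ∈ {ω | 1 ≤ X i ω}
        · rw [Set.indicator_of_mem hω, BChfun_eq_one hδ hω]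
        · rw [Set.indicator_of_notMem hω]
          exact (BChfun_mem_Icc δ (X i ω)).1
      have h1 : (P {ω | 1 ≤ X i ω}).toReal ≤ ∫ ω, BChfun δ (X i ω) ∂P := by
        have heq : ∫ ω, Set.indicator {ω | 1 ≤ X i ω} (fun _ => (1:ℝ)) ω ∂P
            = (P {ω | 1 ≤ X i ω}).toReal • (1:ℝ) := integral_indicator_const (1:ℝ) hBmeas
        rw [smul_eq_mul, mul_one] at heq
        rw [← heq]
        refine integral_mono ((integrable_const (1:ℝ)).indicator hBmeas)
          (hintg P hP _ (((BChfun_lipschitz hδ).continuous.measurable).comp (hmeas i)) habs) hind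
      exact h1.trans (le_csSup hbdd2 ⟨P, hP, rfl⟩)
    -- measurability of the products
    have hGmeas : ∀ (δ : ℝ), 0 < δ → ∀ n : ℕ,
        Measurable (fun ω => ∏ i ∈ Finset.range n, BCG m δ i (X i ω)) := by
      intro δ hδ n
      refine Finset.measurable_prod _ ?_
      intro i _
      unfold BCG
      split
      · exact ((BChfun_lipschitz hδ).continuous.measurable).comp (hmeas i)
      · exact measurable_const
    have hGabs : ∀ (δ : ℝ) (n : ℕ) (ω : Ω), |∏ i ∈ Finset.range n, BCG m δ i (X i ω)| ≤ 1 := by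
      intro δ n ω
      have := BC_prod_mem_Icc (Finset.range n) (fun i => BCG m δ i (X i ω))
        (fun i _ => BCG_mem_Icc m δ i (X i ω))
      exact abs_le.2 ⟨by linarith [this.1], this.2⟩
    -- lower bound for the sublinear expectation of the product
    have hEprodlb : ∀ k : ℕ, 1 - ε/2 ≤
        S.E (fun ω => ∏ i ∈ Finset.range (m+k+1), BCG m (1/(k+1:ℝ)) i (X i ω)) := by
      intro k
      have hδ : (0:ℝ) < 1/(k+1:ℝ) := by positivity
      rw [BC_E_prod S X hH hindep (BCG m (1/(k+1:ℝ))) (1/(k+1:ℝ))⁻¹ (by positivity)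
        (BCG_lip m hδ) (fun i x => BCG_mem_Icc m _ i x) (m+k+1)]
      have hEIcc : ∀ i : ℕ, S.E (fun ω => BCG m (1/(k+1:ℝ)) i (X i ω)) ∈ Set.Icc (0:ℝ) 1 := by
        intro i
        have hmemi : (fun ω => BCG m (1/(k+1:ℝ)) i (X i ω)) ∈ S.H := by
          unfold BCG
          split
          · exact BC_comp1_mem S (hH i) (BChfun_lipschitz hδ)
          · exact S.const_mem 1
        exact ⟨BC_E_nonneg S hmemi (fun ω => (BCG_mem_Icc m _ i _).1),
          BC_E_le_one S hmemi (fun ω => (BCG_mem_Icc m _ i _).2)⟩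
      refine le_trans ?_ (BC_one_sub_sum_le_prod _ _ (fun i _ => hEIcc i))
      have hsum_eq : ∑ i ∈ Finset.range (m+k+1), (1 - S.E (fun ω => BCG m (1/(k+1:ℝ)) i (X i ω)))
          = ∑ i ∈ Finset.Ico m (m+k+1), (1 - S.E (fun ω => BCG m (1/(k+1:ℝ)) i (X i ω))) := by
        refine (Finset.sum_subset ?_ ?_).symm
        · intro i hi
          exact Finset.mem_range.2 (Finset.mem_Ico.1 hi).2
        · intro i hi hni
          have hir := Finset.mem_range.1 hi
          have him : i < m := by
            rcases lt_or_ge i m with h | h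
            · exact h
            · exact absurd (Finset.mem_Ico.2 ⟨h, hir⟩) hni
          have : (fun ω => BCG m (1/(k+1:ℝ)) i (X i ω)) = fun _ => (1:ℝ) := by
            funext ω; unfold BCG; rw [if_neg (by omega)]
          rw [this, S.const 1]; ring
      have hterm : ∀ i ∈ Finset.Ico m (m+k+1),
          1 - S.E (fun ω => BCG m (1/(k+1:ℝ)) i (X i ω)) ≤ 1 - VP Ps {ω | 1 ≤ X i ω} := by
        intro i hi
        have him : m ≤ i := (Finset.mem_Ico.1 hi).1
        have : (fun ω => BCG m (1/(k+1:ℝ)) i (X i ω)) = fun ω => BChfun (1/(k+1:ℝ)) (X i ω) := by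
          funext ω; unfold BCG; rw [if_pos him]
        rw [this]
        linarith [hEi (1/(k+1:ℝ)) hδ i]
      have : ∑ i ∈ Finset.range (m+k+1), (1 - S.E (fun ω => BCG m (1/(k+1:ℝ)) i (X i ω))) < ε/2 := by
        rw [hsum_eq]
        exact lt_of_le_of_lt (Finset.sum_le_sum hterm) (htail (m+k+1))
      linarith
    -- choose measures nearly attaining the sup
    have hchoice : ∀ k : ℕ, ∃ P ∈ Ps,
        1 - ε < ∫ ω, ∏ i ∈ Finset.range (m+k+1), BCG m (1/(k+1:ℝ)) i (X i ω) ∂P := by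
      intro k
      have hδ : (0:ℝ) < 1/(k+1:ℝ) := by positivity
      have hmem : (fun ω => ∏ i ∈ Finset.range (m+k+1), BCG m (1/(k+1:ℝ)) i (X i ω)) ∈ S.H :=
        BC_prodX_mem S X hH _ (1/(k+1:ℝ))⁻¹ (by positivity) (BCG_lip m hδ)
          (fun i x => BCG_mem_Icc m _ i x) (m+k+1)
      have hrepk := hrep _ hmem ⟨1, hGabs (1/(k+1:ℝ)) (m+k+1)⟩
      have hlt : 1 - ε < sSup ((fun P : Measure Ω =>
          ∫ ω, ∏ i ∈ Finset.range (m+k+1), BCG m (1/(k+1:ℝ)) i (X i ω) ∂P) '' Ps) := by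
        rw [← hrepk]
        have := hEprodlb k
        linarith
      obtain ⟨r, ⟨P, hP, rfl⟩, hr⟩ := exists_lt_of_lt_csSup (hPs.image _) hlt
      exact ⟨P, hP, hr⟩
    choose Pseq hPseqmem hPseqint using hchoice
    -- apply compactness with clamped variables
    set Y : ℕ → Ω → ℝ := fun i ω => BCclamp (X i ω) with hYdef
    have hY : ∀ i, Y i ∈ S.H ∧ ∃ M, ∀ ω, |Y i ω| ≤ M := by
      intro i
      constructor
      · exact BC_comp1_mem S (hH i) BCclamp_lipschitz
      · refine ⟨2, fun ω => abs_le.2 ⟨le_max_left _ _, ?_⟩⟩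
        exact max_le (by norm_num) (min_le_right _ _)
    obtain ⟨φ, hφmono, P, hPmem, hconv⟩ := hcompact Y hY Pseq hPseqmem
    haveI := hprob P hPmem
    -- the decreasing sets
    set C : ℕ → Set Ω := fun j => ⋂ i ∈ Finset.Ico m (m+j+1), {ω | 1 - 1/(j+1:ℝ) ≤ X i ω}
      with hCdef
    have hCmeas : ∀ j, MeasurableSet (C j) := by
      intro j
      refine MeasurableSet.biInter (Finset.Ico m (m+j+1)).countable_toSet ?_
      intro i _
      exact measurableSet_le measurable_const (hmeas i)
    have hCj : ∀ j : ℕ, 1 - ε ≤ (P (C j)).toReal := by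
      intro j
      have hδj : (0:ℝ) < 1/(j+1:ℝ) := by positivity
      have hδj1 : (1:ℝ)/(j+1:ℝ) ≤ 1 := by
        rw [div_le_one (by positivity)]
        have : (0:ℝ) ≤ (j:ℝ) := Nat.cast_nonneg j
        linarith
      set d : ℕ := m + j + 1 with hd
      set f : (Fin d → ℝ) → ℝ := fun y => ∏ i : Fin d, BCG m (1/(j+1:ℝ)) ↑i (y i) with hfdef
      have hfK : ∃ K, LipschitzWith K f :=
        ⟨_, BC_lip_pi d (BCG m (1/(j+1:ℝ))) (1/(j+1:ℝ))⁻¹ (by positivity)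
          (BCG_lip m hδj) (fun i x => BCG_mem_Icc m _ i x)⟩
      have hfM : ∃ M, ∀ x, |f x| ≤ M := by
        refine ⟨1, fun x => ?_⟩
        have := BC_prod_mem_Icc Finset.univ (fun i : Fin d => BCG m (1/(j+1:ℝ)) ↑i (x i))
          (fun i _ => BCG_mem_Icc m _ _ _)
        exact abs_le.2 ⟨by linarith [this.1], this.2⟩
      have hfY : ∀ ω, f (fun i : Fin d => Y ↑i ω) =
          ∏ i ∈ Finset.range d, BCG m (1/(j+1:ℝ)) i (X i ω) := by
        intro ω
        have : f (fun i : Fin d => Y ↑i ω) = ∏ i : Fin d, BCG m (1/(j+1:ℝ)) ↑i (X ↑i ω) := by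
          refine Finset.prod_congr rfl ?_
          intro i _
          exact BCG_clamp m hδj hδj1 ↑i (X ↑i ω)
        rw [this]
        exact Fin.prod_univ_eq_prod_range (fun i => BCG m (1/(j+1:ℝ)) i (X i ω)) d
      have hlim := hconv d f hfK hfM
      -- the eventual lower bound
      have hev : ∀ k : ℕ, j ≤ k →
          1 - ε ≤ ∫ ω, f (fun i : Fin d => Y ↑i ω) ∂(Pseq (φ k)) := by
        intro k hk
        set k' : ℕ := φ k with hk'
        have hkk' : k ≤ k' := hφmono.le_apply
        have hjk' : j ≤ k' := hk.trans hkk'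
        have hδ' : (0:ℝ) < 1/(k'+1:ℝ) := by positivity
        have hδ'le : (1:ℝ)/(k'+1:ℝ) ≤ 1/(j+1:ℝ) := by
          apply one_div_le_one_div_of_le (by positivity)
          have : (j:ℝ) ≤ (k':ℝ) := Nat.cast_le.2 hjk'
          linarith
      -- pointwise inequality between the two products
        have hpt : ∀ ω, ∏ i ∈ Finset.range (m+k'+1), BCG m (1/(k'+1:ℝ)) i (X i ω) ≤
            f (fun i : Fin d => Y ↑i ω) := by
          intro ω
          rw [hfY ω]
          obtain ⟨r, hdk⟩ : ∃ r, m + k' + 1 = d + r := ⟨m + k' + 1 - d, by omega⟩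
          rw [hdk, Finset.prod_range_add]
          have h1 : (∏ i ∈ Finset.range d, BCG m (1/(k'+1:ℝ)) i (X i ω)) *
              (∏ i ∈ Finset.range r, BCG m (1/(k'+1:ℝ)) (d+i) (X (d+i) ω)) ≤
              ∏ i ∈ Finset.range d, BCG m (1/(k'+1:ℝ)) i (X i ω) := by
            have hP1 := BC_prod_mem_Icc (Finset.range d)
              (fun i => BCG m (1/(k'+1:ℝ)) i (X i ω)) (fun i _ => BCG_mem_Icc m _ i _)
            have hP2 := BC_prod_mem_Icc (Finset.range r)
              (fun i => BCG m (1/(k'+1:ℝ)) (d+i) (X (d+i) ω)) (fun i _ => BCG_mem_Icc m _ _ _)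
            nlinarith [hP1.1, hP2.1, hP2.2]
          refine h1.trans ?_
          refine Finset.prod_le_prod (fun i _ => (BCG_mem_Icc m _ i _).1) ?_
          intro i _
          exact BCG_mono m hδ' hδ'le i (X i ω)
        -- compare integrals
        have hintP := hPseqint k
        haveI := hprob (Pseq (φ k)) (hPseqmem (φ k))
        have hmono : ∫ ω, ∏ i ∈ Finset.range (m+k'+1), BCG m (1/(k'+1:ℝ)) i (X i ω)
              ∂(Pseq (φ k)) ≤ ∫ ω, f (fun i : Fin d => Y ↑i ω) ∂(Pseq (φ k)) := by
          refine integral_mono (hintg _ (hPseqmem (φ k)) _ (hGmeas _ hδ' _) (hGabs _ _)) ?_ hpt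
          have : (fun ω => f (fun i : Fin d => Y ↑i ω)) =
              fun ω => ∏ i ∈ Finset.range d, BCG m (1/(j+1:ℝ)) i (X i ω) := funext hfY
          rw [this]
          exact hintg _ (hPseqmem (φ k)) _ (hGmeas _ hδj _) (hGabs _ _)
        exact le_trans (le_of_lt (hPseqint (φ k))) hmono
      have hlb : 1 - ε ≤ ∫ ω, f (fun i : Fin d => Y ↑i ω) ∂P := by
        exact ge_of_tendsto hlim (Filter.eventually_atTop.2 ⟨j, hev⟩)
      -- integral is at most the measure of C j
      have hub : ∫ ω, f (fun i : Fin d => Y ↑i ω) ∂P ≤ (P (C j)).toReal := by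
        have hpt : ∀ ω, f (fun i : Fin d => Y ↑i ω) ≤
            Set.indicator (C j) (fun _ => (1:ℝ)) ω := by
          intro ω
          rw [hfY ω]
          by_cases hω : ω ∈ C j
          · rw [Set.indicator_of_mem hω]
            exact (BC_prod_mem_Icc (Finset.range d) _ (fun i _ => BCG_mem_Icc m _ i _)).2
          · rw [Set.indicator_of_notMem hω]
            rw [hCdef] at hω
            simp only [Set.mem_iInter, Set.mem_setOf_eq, not_forall] at hω
            obtain ⟨i, hi, hxi⟩ := hω
            push_neg at hxi
            have him : m ≤ i := (Finset.mem_Ico.1 hi).1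
            have hid : i ∈ Finset.range d := Finset.mem_range.2 (by
              have := (Finset.mem_Ico.1 hi).2; omega)
            have hzero : BCG m (1/(j+1:ℝ)) i (X i ω) = 0 := by
              unfold BCG
              rw [if_pos him]
              exact BChfun_eq_zero hδj (by linarith)
            rw [Finset.prod_eq_zero hid hzero]
        have heq : ∫ ω, Set.indicator (C j) (fun _ => (1:ℝ)) ω ∂P
            = (P (C j)).toReal • (1:ℝ) := integral_indicator_const (1:ℝ) (hCmeas j)
        rw [smul_eq_mul, mul_one] at heq
        rw [← heq]
        refine integral_mono ?_ ((integrable_const (1:ℝ)).indicator (hCmeas j)) hpt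
        have : (fun ω => f (fun i : Fin d => Y ↑i ω)) =
            fun ω => ∏ i ∈ Finset.range d, BCG m (1/(j+1:ℝ)) i (X i ω) := funext hfY
        rw [this]
        exact hintg _ hPmem _ (hGmeas _ hδj _) (hGabs _ _)
      linarith
    -- C is antitone
    have hanti : Antitone C := by
      refine antitone_nat_of_succ_le ?_
      intro j
      intro ω hω
      simp only [hCdef, Set.mem_iInter, Set.mem_setOf_eq] at hω ⊢
      intro i hi
      have hi' : i ∈ Finset.Ico m (m+(j+1)+1) := by
        rw [Finset.mem_Ico] at hi ⊢
        omega
      have h1 := hω i hi'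
      have h2 : (1:ℝ)/(j+1+1:ℝ) ≤ 1/(j+1:ℝ) := by
        apply one_div_le_one_div_of_le (by positivity)
        push_cast
        linarith
      have : ((j:ℕ)+1+1 : ℝ) = ((j+1:ℕ):ℝ)+1 := by push_cast; ring
      rw [this] at h2
      linarith
    -- the intersection is inside the target set
    have hsubset : (⋂ j, C j) ⊆ A := by
      intro ω hω
      rw [hAdef]
      refine Set.mem_iUnion.2 ⟨m, ?_⟩
      simp only [Set.mem_iInter, Set.mem_setOf_eq]
      intro i him
      by_contra hlt
      push_neg at hlt
      obtain ⟨jN, hjN⟩ := exists_nat_one_div_lt (show (0:ℝ) < 1 - X i ω by linarith)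
      set j : ℕ := jN + i with hj
      have hωj := hω
      rw [Set.mem_iInter] at hωj
      have h1 := hωj j
      rw [hCdef] at h1
      simp only [Set.mem_iInter, Set.mem_setOf_eq] at h1
      have hi' : i ∈ Finset.Ico m (m+j+1) := Finset.mem_Ico.2 ⟨him, by omega⟩
      have h2 := h1 i hi'
      have h3 : (1:ℝ)/(j+1:ℝ) ≤ 1/(jN+1:ℝ) := by
        apply one_div_le_one_div_of_le (by positivity)
        have : (jN:ℝ) ≤ (j:ℝ) := Nat.cast_le.2 (by omega)
        linarith
      linarith
    -- limit of measures
    have htends : Tendsto (fun j => P (C j)) atTop (nhds (P (⋂ j, C j))) := by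
      refine tendsto_measure_iInter_atTop (fun j => (hCmeas j).nullMeasurableSet) hanti
        ⟨0, measure_ne_top P _⟩
    have hPiInter : ENNReal.ofReal (1 - ε) ≤ P (⋂ j, C j) := by
      refine ge_of_tendsto htends ?_
      refine Filter.Eventually.of_forall fun j => ?_
      exact ENNReal.ofReal_le_of_le_toReal (hCj j)
    have hPA : ENNReal.ofReal (1 - ε) ≤ P A :=
      hPiInter.trans (measure_mono hsubset)
    have hPAtR : 1 - ε ≤ (P A).toReal := by
      rcases le_or_gt (1 - ε) 0 with h | h
      · exact h.trans ENNReal.toReal_nonneg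
      · have := ENNReal.toReal_mono (measure_ne_top P A) hPA
        rwa [ENNReal.toReal_ofReal h.le] at this
    exact hPAtR.trans (le_csSup (hbdd A) ⟨P, hPmem, rfl⟩)
  have h1 : VP Ps A ≤ 1 := hVle1 A
  have h2 : 1 ≤ VP Ps A := by
    by_contra h
    push_neg at h
    have := key ((1 - VP Ps A)/2) (by linarith)
    linarith
  linarith
end
end
end

section
/- Lévy-type maximal inequality: let X_1,…,X_n be independent random variables in a sub-linear expectation space, S_k = Σ_{i=1}^k X_i, and 0 < α < 1. If there exist constants β_{n,k} such that V(|S_k − S_n| ≥ β_{n,k} + ε) ≤ α for all ε > 0 and all k = 1,…,n, then for all x > 0 and ε > 0: (1 − α) V(max_{k≤n} (|S_k| − β_{n,k}) > x + ε) ≤ V(|S_n| > x). -/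
open Filter MeasureTheory Set
open scoped ENNReal

noncomputable section

namespace LevyAux

/-! ### Lipschitz toolkit -/

def ExLip {A : Type*} [PseudoMetricSpace A] (f : A → ℝ) : Prop := ∃ K, LipschitzWith K f

def IsBL {A : Type*} [PseudoMetricSpace A] (f : A → ℝ) : Prop :=
  ExLip f ∧ ∃ M, ∀ x, |f x| ≤ M

section LipTools

variable {A : Type*} [PseudoMetricSpace A]

lemma exLip_of_dist (C : ℝ) (f : A → ℝ) (h : ∀ x y, dist (f x) (f y) ≤ C * dist x y) :
    ExLip f := ⟨Real.toNNReal C, LipschitzWith.of_dist_le' h⟩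

lemma ExLip.comp {f : ℝ → ℝ} {g : A → ℝ} (hf : ExLip f) (hg : ExLip g) :
    ExLip (fun x => f (g x)) := by
  obtain ⟨K, hK⟩ := hf
  obtain ⟨L, hL⟩ := hg
  exact ⟨K * L, hK.comp hL⟩

lemma exLip_id : ExLip (fun t : ℝ => t) := ⟨1, LipschitzWith.id⟩

lemma exLip_abs : ExLip (fun t : ℝ => |t|) := by
  refine exLip_of_dist 1 _ fun x y => ?_
  rw [Real.dist_eq, Real.dist_eq, one_mul]
  exact abs_abs_sub_abs_le_abs_sub x y

lemma exLip_sub_const (c : ℝ) : ExLip (fun t : ℝ => t - c) := by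
  refine exLip_of_dist 1 _ fun x y => ?_
  rw [Real.dist_eq, Real.dist_eq, one_mul]
  apply le_of_eq; congr 1; ring

lemma exLip_const_sub (c : ℝ) : ExLip (fun t : ℝ => c - t) := by
  refine exLip_of_dist 1 _ fun x y => ?_
  rw [Real.dist_eq, Real.dist_eq, one_mul]
  apply le_of_eq
  rw [show c - x - (c - y) = -(x - y) by ring, abs_neg]

lemma exLip_affine (c l : ℝ) : ExLip (fun t : ℝ => (t - c) * l) := by
  refine exLip_of_dist |l| _ fun x y => ?_
  rw [Real.dist_eq, Real.dist_eq]
  apply le_of_eq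
  rw [show (x - c) * l - (y - c) * l = (x - y) * l by ring, abs_mul, mul_comm]

lemma isBL_const (c : ℝ) : IsBL (fun _ : A => c) :=
  ⟨⟨0, LipschitzWith.const c⟩, ⟨|c|, fun _ => le_rfl⟩⟩

lemma IsBL.mul {f g : A → ℝ} (hf : IsBL f) (hg : IsBL g) : IsBL (fun x => f x * g x) := by
  obtain ⟨⟨Kf, hKf⟩, Mf, hMf⟩ := hf
  obtain ⟨⟨Kg, hKg⟩, Mg, hMg⟩ := hg
  constructor
  · refine exLip_of_dist (Mf * Kg + Mg * Kf) _ fun a b => ?_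
    rw [Real.dist_eq]
    have h1 : |f a * g a - f b * g b| ≤ |f a| * |g a - g b| + |g b| * |f a - f b| := by
      rw [show f a * g a - f b * g b = f a * (g a - g b) + (f a - f b) * g b by ring]
      refine (abs_add_le _ _).trans ?_
      rw [abs_mul, abs_mul]
      exact add_le_add le_rfl (le_of_eq (mul_comm _ _))
    have h2 : |g a - g b| ≤ Kg * dist a b := by
      have := hKg.dist_le_mul a b; rwa [Real.dist_eq] at this
    have h3 : |f a - f b| ≤ Kf * dist a b := by
      have := hKf.dist_le_mul a b; rwa [Real.dist_eq] at this
    have h0f : (0:ℝ) ≤ Mf := le_trans (abs_nonneg _) (hMf a)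
    have h0g : (0:ℝ) ≤ Mg := le_trans (abs_nonneg _) (hMg a)
    calc |f a * g a - f b * g b| ≤ |f a| * |g a - g b| + |g b| * |f a - f b| := h1
      _ ≤ Mf * (Kg * dist a b) + Mg * (Kf * dist a b) := by
          refine add_le_add ?_ ?_
          · exact mul_le_mul (hMf a) h2 (abs_nonneg _) h0f
          · exact mul_le_mul (hMg b) h3 (abs_nonneg _) h0g
      _ = (Mf * Kg + Mg * Kf) * dist a b := by ring
  · refine ⟨|Mf| * |Mg|, fun x => ?_⟩
    rw [abs_mul]
    exact mul_le_mul ((hMf x).trans (le_abs_self _)) ((hMg x).trans (le_abs_self _))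
      (abs_nonneg _) (abs_nonneg _)

lemma isBL_prod {ι : Type*} (s : Finset ι) (g : ι → A → ℝ)
    (h : ∀ j ∈ s, IsBL (g j)) : IsBL (fun y => ∏ j ∈ s, g j y) := by
  classical
  induction s using Finset.induction_on with
  | empty => simpa using isBL_const (A := A) 1
  | @insert a t ha ih =>
    have hmain := (h a (Finset.mem_insert_self a t)).mul
      (ih fun j hj => h j (Finset.mem_insert_of_mem hj))
    have e : (fun y => ∏ j ∈ insert a t, g j y) = fun y => g a y * ∏ j ∈ t, g j y :=
      funext fun y => Finset.prod_insert ha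
    rw [e]; exact hmain

/-! ### clamp to [0,1] -/

def cl01 (t : ℝ) : ℝ := max (min t 1) 0

lemma cl01_nonneg (t : ℝ) : 0 ≤ cl01 t := le_max_right _ _

lemma cl01_le_one (t : ℝ) : cl01 t ≤ 1 := max_le (min_le_right _ _) zero_le_one

lemma cl01_eq_one {t : ℝ} (h : 1 ≤ t) : cl01 t = 1 := by
  unfold cl01
  rw [min_eq_right h, max_eq_left zero_le_one]

lemma cl01_pos {t : ℝ} (h : 0 < cl01 t) : 0 < t := by
  by_contra hc
  push_neg at hc
  have h0 : cl01 t = 0 := by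
    unfold cl01
    rw [max_eq_right (le_trans (min_le_left _ _) hc)]
  rw [h0] at h
  exact lt_irrefl _ h

lemma exLip_cl01 : ExLip cl01 :=
  ⟨1, (LipschitzWith.id.min_const 1).max_const 0⟩

lemma isBL_cl01_comp {g : A → ℝ} (hg : ExLip g) : IsBL (fun y => cl01 (g y)) := by
  refine ⟨exLip_cl01.comp hg, 1, fun y => ?_⟩
  rw [abs_le]
  exact ⟨by linarith [cl01_nonneg (g y)], cl01_le_one _⟩

end LipTools

/-! ### pi-space Lipschitz lemmas -/

lemma lipschitzWith_eval {m : ℕ} (i : Fin m) : LipschitzWith 1 (fun v : Fin m → ℝ => v i) :=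
  LipschitzWith.of_dist_le_mul fun a b => by
    rw [NNReal.coe_one, one_mul]; exact dist_le_pi_dist a b i

lemma lipschitzWith_restrict (m k : ℕ) (h : k ≤ m) :
    LipschitzWith 1 (fun a : Fin m → ℝ => (fun i : Fin k => a (Fin.castLE h i))) :=
  LipschitzWith.of_dist_le_mul fun a b => by
    rw [NNReal.coe_one, one_mul]
    exact (dist_pi_le_iff dist_nonneg).mpr fun i => dist_le_pi_dist a b _

lemma exLip_sum_ite (m : ℕ) (p : ℕ → Prop) [DecidablePred p] :
    ExLip (fun a : Fin m → ℝ => ∑ i : Fin m, if p i then a i else 0) := by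
  refine exLip_of_dist m _ fun a b => ?_
  rw [Real.dist_eq, ← Finset.sum_sub_distrib]
  calc |∑ i : Fin m, ((if p i then a i else 0) - (if p i then b i else 0))|
      ≤ ∑ i : Fin m, |(if p i then a i else 0) - (if p i then b i else 0)| :=
        Finset.abs_sum_le_sum_abs _ _
    _ ≤ ∑ _i : Fin m, dist a b := by
        refine Finset.sum_le_sum fun i _ => ?_
        split_ifs with h
        · rw [← Real.dist_eq]; exact dist_le_pi_dist a b i
        · simpa using dist_nonneg
    _ = m * dist a b := by
        rw [Finset.sum_const, Finset.card_univ, Fintype.card_fin, nsmul_eq_mul]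

lemma sum_ite_lt_eq (m j : ℕ) (hj : j ≤ m) (g : ℕ → ℝ) :
    (∑ i : Fin m, if (i : ℕ) < j then g i else 0) = ∑ i ∈ Finset.range j, g i := by
  rw [Fin.sum_univ_eq_sum_range (fun i => if i < j then g i else 0) m, ← Finset.sum_filter]
  congr 1
  ext a
  simp only [Finset.mem_filter, Finset.mem_range]
  omega

lemma sum_ite_ge_eq (m j : ℕ) (g : ℕ → ℝ) :
    (∑ i : Fin m, if j ≤ (i : ℕ) then g i else 0) = ∑ i ∈ Finset.Ico j m, g i := by
  rw [Fin.sum_univ_eq_sum_range (fun i => if j ≤ i then g i else 0) m, ← Finset.sum_filter]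
  congr 1
  ext a
  simp only [Finset.mem_filter, Finset.mem_range, Finset.mem_Ico]
  omega

/-! ### telescoping identity -/

lemma telescope (g : ℕ → ℝ) : ∀ n : ℕ,
    ∑ k ∈ Finset.Icc 1 n, g k * ∏ j ∈ Finset.Ico 1 k, (1 - g j)
      = 1 - ∏ j ∈ Finset.Icc 1 n, (1 - g j)
  | 0 => by simp
  | (n + 1) => by
      rw [Finset.sum_Icc_succ_top (by omega : 1 ≤ n + 1),
        Finset.prod_Icc_succ_top (by omega : 1 ≤ n + 1), telescope g n,
        Finset.Ico_add_one_right_eq_Icc]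
      ring

end LevyAux
namespace LevyAux

variable {Ω : Type*}

/-! ### closure properties of `H` -/

lemma mem_comp1 (S : SLE Ω) {f : Ω → ℝ} (hf : f ∈ S.H) {φ : ℝ → ℝ} (hφ : ExLip φ) :
    (fun ω => φ (f ω)) ∈ S.H := by
  obtain ⟨K, hK⟩ := hφ
  exact S.comp_mem 1 (fun _ => f) (fun _ => hf) (fun v => φ (v 0))
    ((hK.comp (lipschitzWith_eval 0)).locallyLipschitz)

lemma locallyLipschitz_mul2 : LocallyLipschitz (fun v : Fin 2 → ℝ => v 0 * v 1) := by
  have h0 : ContDiff ℝ 1 (fun v : Fin 2 → ℝ => v 0) :=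
    (ContinuousLinearMap.proj (R := ℝ) (φ := fun _ : Fin 2 => ℝ) 0).contDiff
  have h1 : ContDiff ℝ 1 (fun v : Fin 2 → ℝ => v 1) :=
    (ContinuousLinearMap.proj (R := ℝ) (φ := fun _ : Fin 2 => ℝ) 1).contDiff
  exact (h0.mul h1).locallyLipschitz

lemma mem_mul (S : SLE Ω) {f g : Ω → ℝ} (hf : f ∈ S.H) (hg : g ∈ S.H) :
    (fun ω => f ω * g ω) ∈ S.H := by
  have h := S.comp_mem 2 ![f, g] (by
      intro i
      fin_cases i
      · exact hf
      · exact hg) (fun v => v 0 * v 1) locallyLipschitz_mul2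
  exact h

lemma mem_add (S : SLE Ω) {f g : Ω → ℝ} (hf : f ∈ S.H) (hg : g ∈ S.H) :
    (fun ω => f ω + g ω) ∈ S.H := by
  have h := S.comp_mem 2 ![f, g] (by
      intro i
      fin_cases i
      · exact hf
      · exact hg) (fun v => v 0 + v 1)
    (((lipschitzWith_eval (m := 2) 0).add (lipschitzWith_eval 1)).locallyLipschitz)
  exact h

lemma mem_sum (S : SLE Ω) (s : Finset ℕ) (g : ℕ → Ω → ℝ) (hg : ∀ k ∈ s, g k ∈ S.H) :
    (fun ω => ∑ k ∈ s, g k ω) ∈ S.H := by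
  classical
  induction s using Finset.induction_on with
  | empty => simpa using S.const_mem 0
  | @insert a t ha ih =>
    have h1 : (fun ω => g a ω + ∑ k ∈ t, g k ω) ∈ S.H :=
      mem_add S (hg a (Finset.mem_insert_self a t))
        (ih fun k hk => hg k (Finset.mem_insert_of_mem hk))
    have e : (fun ω => ∑ k ∈ insert a t, g k ω) = fun ω => g a ω + ∑ k ∈ t, g k ω :=
      funext fun ω => Finset.sum_insert ha
    rw [e]; exact h1

lemma mem_prod (S : SLE Ω) (s : Finset ℕ) (g : ℕ → Ω → ℝ) (hg : ∀ k ∈ s, g k ∈ S.H) :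
    (fun ω => ∏ k ∈ s, g k ω) ∈ S.H := by
  classical
  induction s using Finset.induction_on with
  | empty => simpa using S.const_mem 1
  | @insert a t ha ih =>
    have h1 : (fun ω => g a ω * ∏ k ∈ t, g k ω) ∈ S.H :=
      mem_mul S (hg a (Finset.mem_insert_self a t))
        (ih fun k hk => hg k (Finset.mem_insert_of_mem hk))
    have e : (fun ω => ∏ k ∈ insert a t, g k ω) = fun ω => g a ω * ∏ k ∈ t, g k ω :=
      funext fun ω => Finset.prod_insert ha
    rw [e]; exact h1

/-! ### basic expectation lemmas -/

lemma E_le_const (S : SLE Ω) {u : Ω → ℝ} (hu : u ∈ S.H) {c : ℝ} (h : ∀ ω, u ω ≤ c) :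
    S.E u ≤ c := by
  have := S.mono u hu _ (S.const_mem c) h
  rwa [S.const] at this

lemma const_le_E (S : SLE Ω) {u : Ω → ℝ} (hu : u ∈ S.H) {c : ℝ} (h : ∀ ω, c ≤ u ω) :
    c ≤ S.E u := by
  have := S.mono _ (S.const_mem c) u hu h
  rwa [S.const] at this

lemma E_nonneg (S : SLE Ω) {u : Ω → ℝ} (hu : u ∈ S.H) (h : ∀ ω, 0 ≤ u ω) : 0 ≤ S.E u :=
  const_le_E S hu h

lemma E_add_const (S : SLE Ω) {u : Ω → ℝ} (hu : u ∈ S.H) (c : ℝ) :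
    S.E (fun ω => u ω + c) = S.E u + c := by
  have memuc : (fun ω => u ω + c) ∈ S.H := mem_add S hu (S.const_mem c)
  have h1 : S.E (fun ω => u ω + c) ≤ S.E u + c := by
    have := S.subadd u hu _ (S.const_mem c)
    rwa [S.const] at this
  have h2 : S.E u ≤ S.E (fun ω => u ω + c) + (-c) := by
    have h3 : S.E (fun ω => (u ω + c) + (-c)) ≤ S.E (fun ω => u ω + c) + S.E (fun _ => (-c)) :=
      S.subadd _ memuc _ (S.const_mem (-c))
    rw [S.const] at h3
    have h4 : S.E (fun ω => (u ω + c) + (-c)) = S.E u := by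
      congr 1; funext ω; ring
    rwa [h4] at h3
  linarith

lemma E_sub_le (S : SLE Ω) {u v : Ω → ℝ} (hv : v ∈ S.H)
    (hd : (fun ω => u ω - v ω) ∈ S.H) {c : ℝ} (h : ∀ ω, u ω - v ω ≤ c) :
    S.E u ≤ S.E v + c := by
  have h1 : S.E (fun ω => v ω + (u ω - v ω)) ≤ S.E v + S.E (fun ω => u ω - v ω) :=
    S.subadd v hv _ hd
  have h2 : S.E (fun ω => v ω + (u ω - v ω)) = S.E u := by
    congr 1; funext ω; ring
  have h3 : S.E (fun ω => u ω - v ω) ≤ c := E_le_const S hd h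
  rw [h2] at h1
  linarith

lemma E_sum_le (S : SLE Ω) (s : Finset ℕ) (g : ℕ → Ω → ℝ) (hg : ∀ k ∈ s, g k ∈ S.H) :
    S.E (fun ω => ∑ k ∈ s, g k ω) ≤ ∑ k ∈ s, S.E (g k) := by
  classical
  induction s using Finset.induction_on with
  | empty =>
    simp only [Finset.sum_empty]
    exact le_of_eq (S.const 0)
  | @insert a t ha ih =>
    have hmem_t : (fun ω => ∑ k ∈ t, g k ω) ∈ S.H :=
      mem_sum S t g (fun k hk => hg k (Finset.mem_insert_of_mem hk))
    have h1 : S.E (fun ω => g a ω + ∑ k ∈ t, g k ω)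
        ≤ S.E (g a) + S.E (fun ω => ∑ k ∈ t, g k ω) :=
      S.subadd _ (hg a (Finset.mem_insert_self a t)) _ hmem_t
    have e : (fun ω => ∑ k ∈ insert a t, g k ω) = fun ω => g a ω + ∑ k ∈ t, g k ω :=
      funext fun ω => Finset.sum_insert ha
    rw [e, Finset.sum_insert ha]
    exact h1.trans (by linarith [ih (fun k hk => hg k (Finset.mem_insert_of_mem hk))])

end LevyAux
namespace LevyAux

variable {Ω : Type*}

/-- Key iterated-independence lemma: a nonnegative bounded Lipschitz function of the
first `k` variables factors out of expectations against bounded Lipschitz functions of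
`∑_{i ∈ [k, m)} X i`. -/
lemma lemA (S : SLE Ω) (X : ℕ → Ω → ℝ) (hindep : S.Indep X) (hH : ∀ i, X i ∈ S.H)
    (k : ℕ) (m : ℕ) (hkm : k ≤ m) :
    ∀ h : ℝ → ℝ, ExLip h → (∃ M, ∀ t, |h t| ≤ M) →
    ∃ c : ℝ,
      S.E (fun ω => h (∑ i ∈ Finset.Ico k m, X i ω)) = c ∧
      ∀ F₀ : (Fin k → ℝ) → ℝ, ExLip F₀ → (∃ M, ∀ a, |F₀ a| ≤ M) → (∀ a, 0 ≤ F₀ a) →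
        S.E (fun ω => F₀ (fun i => X i ω) * h (∑ i ∈ Finset.Ico k m, X i ω)) =
          S.E (fun ω => F₀ (fun i => X i ω) * c) := by
  induction m, hkm using Nat.le_induction with
  | base =>
    intro h _ _
    refine ⟨h 0, ?_, ?_⟩
    · simp only [Finset.Ico_self, Finset.sum_empty]
      exact S.const (h 0)
    · intro F₀ _ _ _
      simp only [Finset.Ico_self, Finset.sum_empty]
  | succ m hkm ih =>
    intro h hLip hBdd
    obtain ⟨Kh, hKh⟩ := hLip
    obtain ⟨Mh, hMh⟩ := hBdd
    -- conditional one-step expectation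
    set h' : ℝ → ℝ := fun t => S.E (fun ω' => h (t + X m ω')) with hh'
    have hmem_inner : ∀ t : ℝ, (fun ω' => h (t + X m ω')) ∈ S.H := by
      intro t
      exact mem_comp1 S (hH m) (ExLip.comp ⟨Kh, hKh⟩ (by
        refine exLip_of_dist 1 _ fun a b => ?_
        rw [Real.dist_eq, Real.dist_eq, one_mul]
        apply le_of_eq; congr 1; ring))
    have hdiffmem : ∀ t s : ℝ, (fun ω' => h (t + X m ω') - h (s + X m ω')) ∈ S.H := by
      intro t s
      have hlipd : ExLip (fun z : ℝ => h (t + z) - h (s + z)) := by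
        refine exLip_of_dist (Kh + Kh) _ fun a b => ?_
        rw [Real.dist_eq, Real.dist_eq]
        have e1 := hKh.dist_le_mul (t + a) (t + b)
        have e2 := hKh.dist_le_mul (s + a) (s + b)
        rw [Real.dist_eq, Real.dist_eq] at e1 e2
        simp only [add_sub_add_left_eq_sub] at e1 e2
        have habs : |h (t + a) - h (s + a) - (h (t + b) - h (s + b))|
            ≤ |h (t + a) - h (t + b)| + |h (s + a) - h (s + b)| := by
          rw [show h (t + a) - h (s + a) - (h (t + b) - h (s + b))
              = (h (t + a) - h (t + b)) - (h (s + a) - h (s + b)) by ring]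
          exact abs_sub _ _
        nlinarith [habs, e1, e2]
      exact mem_comp1 S (hH m) hlipd
    have hdist : ∀ t s : ℝ, dist (h' t) (h' s) ≤ (Kh : ℝ) * dist t s := by
      intro t s
      rw [Real.dist_eq, Real.dist_eq]
      show |S.E (fun ω' => h (t + X m ω')) - S.E (fun ω' => h (s + X m ω'))| ≤ (Kh : ℝ) * |t - s|
      have hb : ∀ u v : ℝ, (∀ ω', h (u + X m ω') - h (v + X m ω') ≤ (Kh : ℝ) * |u - v|) := by
        intro u v ω'
        have := hKh.dist_le_mul (u + X m ω') (v + X m ω')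
        rw [Real.dist_eq, Real.dist_eq] at this
        simp only [add_sub_add_right_eq_sub] at this
        have := (abs_le.mp this).2
        have habs := le_abs_self (h (u + X m ω') - h (v + X m ω'))
        have h2 := abs_sub_abs_le_abs_sub (h (u + X m ω')) (h (v + X m ω'))
        calc h (u + X m ω') - h (v + X m ω')
            ≤ |h (u + X m ω') - h (v + X m ω')| := habs
          _ ≤ (Kh : ℝ) * |u - v| := by
              have h3 := hKh.dist_le_mul (u + X m ω') (v + X m ω')
              rw [Real.dist_eq, Real.dist_eq] at h3
              simpa [add_sub_add_right_eq_sub] using h3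
      have h1 : S.E (fun ω' => h (t + X m ω')) ≤ S.E (fun ω' => h (s + X m ω')) + (Kh : ℝ) * |t - s| :=
        E_sub_le S (hmem_inner s) (hdiffmem t s) (fun ω' => hb t s ω')
      have h2 : S.E (fun ω' => h (s + X m ω')) ≤ S.E (fun ω' => h (t + X m ω')) + (Kh : ℝ) * |s - t| :=
        E_sub_le S (hmem_inner t) (hdiffmem s t) (fun ω' => hb s t ω')
      rw [abs_sub_comm s t] at h2
      rw [abs_le]
      constructor <;> [linarith [h2]; linarith [h1]]
    have hLip' : ExLip h' := exLip_of_dist (Kh : ℝ) h' hdist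
    have hBdd' : ∃ M, ∀ t, |h' t| ≤ M := by
      refine ⟨Mh, fun t => ?_⟩
      show |S.E (fun ω' => h (t + X m ω'))| ≤ Mh
      rw [abs_le]
      constructor
      · exact const_le_E S (hmem_inner t) (fun ω' => (abs_le.mp (hMh _)).1)
      · exact E_le_const S (hmem_inner t) (fun ω' => (abs_le.mp (hMh _)).2)
    obtain ⟨c, hc1, hc2⟩ := ih h' hLip' hBdd'
    have main : ∀ F₀ : (Fin k → ℝ) → ℝ, ExLip F₀ → (∃ M, ∀ a, |F₀ a| ≤ M) → (∀ a, 0 ≤ F₀ a) →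
        S.E (fun ω => F₀ (fun i => X i ω) * h (∑ i ∈ Finset.Ico k (m + 1), X i ω)) =
          S.E (fun ω => F₀ (fun i => X i ω) * c) := by
      intro F₀ hF₀L hF₀B hF₀nn
      obtain ⟨KF, hKF⟩ := hF₀L
      obtain ⟨MF, hMF⟩ := hF₀B
      set φ : (Fin m → ℝ) → ℝ → ℝ := fun a b =>
        F₀ (fun i => a (Fin.castLE hkm i)) *
          h ((∑ i : Fin m, if k ≤ (i : ℕ) then a i else 0) + b) with hφdef
      have hBL1 : IsBL (fun p : (Fin m → ℝ) × ℝ => F₀ (fun i => p.1 (Fin.castLE hkm i))) := by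
        refine ⟨⟨KF * (1 * 1), ?_⟩, ⟨|MF|, fun p => (hMF _).trans (le_abs_self _)⟩⟩
        exact hKF.comp ((lipschitzWith_restrict m k hkm).comp LipschitzWith.prod_fst)
      have hBL2 : IsBL (fun p : (Fin m → ℝ) × ℝ =>
          h ((∑ i : Fin m, if k ≤ (i : ℕ) then p.1 i else 0) + p.2)) := by
        obtain ⟨Ks, hKs⟩ := exLip_sum_ite m (fun i => k ≤ i)
        refine ⟨⟨Kh * (Ks * 1 + 1), ?_⟩, ⟨Mh, fun p => hMh _⟩⟩
        exact hKh.comp ((hKs.comp LipschitzWith.prod_fst).add LipschitzWith.prod_snd)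
      have hφBL : IsBL (fun p : (Fin m → ℝ) × ℝ => φ p.1 p.2) := hBL1.mul hBL2
      obtain ⟨Mφ, hMφ⟩ := hφBL.2
      have indep := hindep m φ hφBL.1 ⟨Mφ, fun a b => hMφ (a, b)⟩
      have eq1 : (fun ω => F₀ (fun i => X i ω) * h (∑ i ∈ Finset.Ico k (m + 1), X i ω))
          = (fun ω => φ (fun i => X i ω) (X m ω)) := by
        funext ω
        have eA : (fun i : Fin k => X (↑(Fin.castLE hkm i)) ω) = (fun i : Fin k => X (↑i) ω) := by
          funext i
          rw [Fin.coe_castLE]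
        simp only [hφdef]
        rw [eA, sum_ite_ge_eq m k (fun i => X i ω), Finset.sum_Ico_succ_top hkm]
      have eq2 : S.E (fun ω => S.E (fun ω' => φ (fun i => X i ω) (X m ω')))
          = S.E (fun ω => F₀ (fun i => X i ω) * h' (∑ i ∈ Finset.Ico k m, X i ω)) := by
        congr 1
        funext ω
        have eA : (fun i : Fin k => X (↑(Fin.castLE hkm i)) ω) = (fun i : Fin k => X (↑i) ω) := by
          funext i
          rw [Fin.coe_castLE]
        have e : (fun ω' => φ (fun i => X i ω) (X m ω'))
            = (fun ω' => F₀ (fun i => X i ω) *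
                h ((∑ i ∈ Finset.Ico k m, X i ω) + X m ω')) := by
          funext ω'
          simp only [hφdef]
          rw [eA, sum_ite_ge_eq m k (fun i => X i ω)]
        rw [e, S.poshomog _ (hmem_inner _) _ (hF₀nn _)]
      calc S.E (fun ω => F₀ (fun i => X i ω) * h (∑ i ∈ Finset.Ico k (m + 1), X i ω))
          = S.E (fun ω => φ (fun i => X i ω) (X m ω)) := by rw [eq1]
        _ = S.E (fun ω => S.E (fun ω' => φ (fun i => X i ω) (X m ω'))) := indep
        _ = S.E (fun ω => F₀ (fun i => X i ω) * h' (∑ i ∈ Finset.Ico k m, X i ω)) := eq2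
        _ = S.E (fun ω => F₀ (fun i => X i ω) * c) := hc2 F₀ ⟨KF, hKF⟩ ⟨MF, hMF⟩ hF₀nn
    refine ⟨c, ?_, main⟩
    have h1 := main (fun _ => 1) ⟨0, LipschitzWith.const 1⟩ ⟨1, fun a => by norm_num⟩
      (fun a => zero_le_one)
    simp only [one_mul] at h1
    rw [h1]
    exact S.const c

end LevyAux
namespace LevyAux

variable {Ω : Type*}

/-! ### the concrete test functions -/

def uSh (x ε t : ℝ) : ℝ := cl01 ((t - (x + ε / 2)) * (2 / ε))

def pSh (b ε t : ℝ) : ℝ := cl01 ((b + ε / 2 - |t|) * (4 / ε))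

lemma uSh_nonneg (x ε t : ℝ) : 0 ≤ uSh x ε t := cl01_nonneg _

lemma uSh_le_one (x ε t : ℝ) : uSh x ε t ≤ 1 := cl01_le_one _

lemma uSh_eq_one {x ε t : ℝ} (hε : 0 < ε) (h : x + ε < t) : uSh x ε t = 1 := by
  apply cl01_eq_one
  have h2 : (0:ℝ) < 2 / ε := by positivity
  have key : (ε / 2) * (2 / ε) = 1 := by field_simp
  calc (1:ℝ) = (ε / 2) * (2 / ε) := key.symm
    _ ≤ (t - (x + ε / 2)) * (2 / ε) := by
        apply mul_le_mul_of_nonneg_right _ h2.le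
        linarith

lemma uSh_pos {x ε t : ℝ} (hε : 0 < ε) (h : 0 < uSh x ε t) : x + ε / 2 < t := by
  have h0 := cl01_pos h
  have h2 : (0:ℝ) < 2 / ε := by positivity
  nlinarith

lemma pSh_nonneg (b ε t : ℝ) : 0 ≤ pSh b ε t := cl01_nonneg _

lemma pSh_le_one (b ε t : ℝ) : pSh b ε t ≤ 1 := cl01_le_one _

lemma pSh_eq_one {b ε t : ℝ} (hε : 0 < ε) (h : |t| < b + ε / 4) : pSh b ε t = 1 := by
  apply cl01_eq_one
  have h4 : (0:ℝ) < 4 / ε := by positivity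
  have key : (ε / 4) * (4 / ε) = 1 := by field_simp
  calc (1:ℝ) = (ε / 4) * (4 / ε) := key.symm
    _ ≤ (b + ε / 2 - |t|) * (4 / ε) := by
        apply mul_le_mul_of_nonneg_right _ h4.le
        linarith

lemma pSh_pos {b ε t : ℝ} (hε : 0 < ε) (h : 0 < pSh b ε t) : |t| < b + ε / 2 := by
  have h0 := cl01_pos h
  have h4 : (0:ℝ) < 4 / ε := by positivity
  nlinarith

lemma exLip_uSh_abs (x ε b : ℝ) : ExLip (fun t : ℝ => uSh x ε (|t| - b)) :=
  exLip_cl01.comp ((exLip_affine (x + ε / 2) (2 / ε)).comp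
    ((exLip_sub_const b).comp exLip_abs))

lemma exLip_pSh (b ε : ℝ) : ExLip (fun t : ℝ => pSh b ε t) :=
  exLip_cl01.comp (by
    have h1 : ExLip (fun z : ℝ => (b + ε / 2 - z) * (4 / ε)) := by
      refine exLip_of_dist |4 / ε| _ fun z w => ?_
      rw [Real.dist_eq, Real.dist_eq]
      apply le_of_eq
      rw [show (b + ε / 2 - z) * (4 / ε) - (b + ε / 2 - w) * (4 / ε) = -((z - w) * (4 / ε)) by
        ring, abs_neg, abs_mul, mul_comm]
    exact h1.comp exLip_abs)

/-- `f_k` at the level of `Ω`. -/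
def fkP (X : ℕ → Ω → ℝ) (β : ℕ → ℝ) (x ε : ℝ) (k : ℕ) : Ω → ℝ := fun ω =>
  uSh x ε (|∑ i ∈ Finset.range k, X i ω| - β k) *
    ∏ j ∈ Finset.Ico 1 k, (1 - uSh x ε (|∑ i ∈ Finset.range j, X i ω| - β j))

/-- `f_k` at the level of `Fin k → ℝ`. -/
def FkA (β : ℕ → ℝ) (x ε : ℝ) (k : ℕ) : (Fin k → ℝ) → ℝ := fun a =>
  uSh x ε (|∑ i : Fin k, if (i : ℕ) < k then a i else 0| - β k) *
    ∏ j ∈ Finset.Ico 1 k, (1 - uSh x ε (|∑ i : Fin k, if (i : ℕ) < j then a i else 0| - β j))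

lemma FkA_apply (X : ℕ → Ω → ℝ) (β : ℕ → ℝ) (x ε : ℝ) (k : ℕ) (ω : Ω) :
    FkA β x ε k (fun i => X i ω) = fkP X β x ε k ω := by
  unfold FkA fkP
  rw [sum_ite_lt_eq k k le_rfl (fun i => X i ω)]
  congr 1
  apply Finset.prod_congr rfl
  intro j hj
  rw [sum_ite_lt_eq k j (by exact (Finset.mem_Ico.mp hj).2.le) (fun i => X i ω)]

lemma FkA_nonneg (β : ℕ → ℝ) (x ε : ℝ) (k : ℕ) (a : Fin k → ℝ) : 0 ≤ FkA β x ε k a := by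
  unfold FkA
  apply mul_nonneg (uSh_nonneg _ _ _)
  exact Finset.prod_nonneg fun j _ => by linarith [uSh_le_one x ε (|∑ i : Fin k, if (i : ℕ) < j then a i else 0| - β j)]

lemma isBL_FkA (β : ℕ → ℝ) (x ε : ℝ) (k : ℕ) : IsBL (FkA β x ε k) := by
  unfold FkA
  apply IsBL.mul
  · refine isBL_cl01_comp ?_
    exact (exLip_affine (x + ε / 2) (2 / ε)).comp ((exLip_sub_const (β k)).comp
      (exLip_abs.comp (exLip_sum_ite k (fun i => i < k))))
  · apply isBL_prod
    intro j _
    refine ⟨?_, 1, fun a => ?_⟩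
    · exact (exLip_const_sub 1).comp ((exLip_uSh_abs x ε (β j)).comp
        (exLip_sum_ite k (fun i => i < j)))
    · show |1 - uSh x ε (|∑ i : Fin k, if (i : ℕ) < j then a i else 0| - β j)| ≤ 1
      rw [abs_le]
      constructor
      · linarith [uSh_le_one x ε (|∑ i : Fin k, if (i : ℕ) < j then a i else 0| - β j)]
      · linarith [uSh_nonneg x ε (|∑ i : Fin k, if (i : ℕ) < j then a i else 0| - β j)]

lemma fkP_mem (S : SLE Ω) (X : ℕ → Ω → ℝ) (hH : ∀ i, X i ∈ S.H) (β : ℕ → ℝ) (x ε : ℝ)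
    (k : ℕ) : fkP X β x ε k ∈ S.H := by
  unfold fkP
  apply mem_mul S
  · exact mem_comp1 S (mem_sum S (Finset.range k) X fun i _ => hH i) (exLip_uSh_abs x ε (β k))
  · apply mem_prod S
    intro j _
    exact mem_comp1 S (mem_sum S (Finset.range j) X fun i _ => hH i)
      ((exLip_const_sub 1).comp (exLip_uSh_abs x ε (β j)))

lemma fkP_nonneg (X : ℕ → Ω → ℝ) (β : ℕ → ℝ) (x ε : ℝ) (k : ℕ) (ω : Ω) :
    0 ≤ fkP X β x ε k ω := by
  unfold fkP
  apply mul_nonneg (uSh_nonneg _ _ _)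
  exact Finset.prod_nonneg fun j _ => by
    linarith [uSh_le_one x ε (|∑ i ∈ Finset.range j, X i ω| - β j)]

end LevyAux

open LevyAux

/-- Lévy-type maximal inequality under sub-linear expectation. -/
theorem levy_maximal_inequality {Ω : Type*} (S : SLE Ω) (n : ℕ)
    (X : ℕ → Ω → ℝ) (hindep : S.Indep X) (hH : ∀ i, X i ∈ S.H)
    (α : ℝ) (hα0 : 0 < α) (hα1 : α < 1) (β : ℕ → ℝ)
    (hyp : ∀ ε > (0 : ℝ), ∀ k, 1 ≤ k → k ≤ n →
      S.V {ω | β k + ε ≤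
        |∑ i ∈ Finset.range k, X i ω - ∑ i ∈ Finset.range n, X i ω|} ≤ α) :
    ∀ x > (0 : ℝ), ∀ ε > (0 : ℝ),
      (1 - α) * S.V {ω | ∃ k, 1 ≤ k ∧ k ≤ n ∧
          x + ε < |∑ i ∈ Finset.range k, X i ω| - β k} ≤
        S.V {ω | x < |∑ i ∈ Finset.range n, X i ω|} := by
  intro x hx ε hε
  classical
  have hε4 : (0:ℝ) < ε / 4 := by linarith
  have h1α : (0:ℝ) ≤ 1 - α := by linarith
  -- memberships of the building blocks
  have hpk_mem : ∀ k : ℕ, (fun ω => pSh (β k) ε (∑ i ∈ Finset.Ico k n, X i ω)) ∈ S.H :=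
    fun k => mem_comp1 S (mem_sum S _ X fun i _ => hH i) (exLip_pSh (β k) ε)
  have hfk_mem : ∀ k, fkP X β x ε k ∈ S.H := fun k => fkP_mem S X hH β x ε k
  -- the three composite functions
  set FF : Ω → ℝ := fun ω => ∑ k ∈ Finset.Icc 1 n, fkP X β x ε k ω with hFF
  set GG : Ω → ℝ := fun ω => ∑ k ∈ Finset.Icc 1 n,
      fkP X β x ε k ω * pSh (β k) ε (∑ i ∈ Finset.Ico k n, X i ω) with hGG
  set DD : Ω → ℝ := fun ω => ∑ k ∈ Finset.Icc 1 n,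
      fkP X β x ε k ω * ((1 - α) - pSh (β k) ε (∑ i ∈ Finset.Ico k n, X i ω)) with hDD
  have hF_mem : FF ∈ S.H := by
    rw [hFF]; exact mem_sum S _ _ fun k _ => hfk_mem k
  have hG_mem : GG ∈ S.H := by
    rw [hGG]; exact mem_sum S _ _ fun k _ => mem_mul S (hfk_mem k) (hpk_mem k)
  have hD_mem : DD ∈ S.H := by
    rw [hDD]
    exact mem_sum S _ _ fun k _ => mem_mul S (hfk_mem k)
      (mem_comp1 S (hpk_mem k) (exLip_const_sub (1 - α)))
  -- generic facts about V
  have hV_le : ∀ (A : Set Ω) (ξ : Ω → ℝ), ξ ∈ S.H → (∀ ω, 0 ≤ ξ ω) → (∀ ω ∈ A, 1 ≤ ξ ω) →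
      S.V A ≤ S.E ξ := by
    intro A ξ h1 h2 h3
    apply csInf_le
    · refine ⟨0, ?_⟩
      rintro r ⟨ζ, hζH, hζ0, -, rfl⟩
      exact E_nonneg S hζH hζ0
    · exact ⟨ξ, h1, h2, h3, rfl⟩
  have hle_V : ∀ (A : Set Ω) (g : Ω → ℝ), g ∈ S.H →
      (∀ ξ : Ω → ℝ, ξ ∈ S.H → (∀ ω, 0 ≤ ξ ω) → (∀ ω ∈ A, 1 ≤ ξ ω) → (∀ ω, g ω ≤ ξ ω)) →
      S.E g ≤ S.V A := by
    intro A g hg hcomp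
    apply le_csInf
    · exact ⟨1, ⟨fun _ => 1, S.const_mem 1, fun ω => zero_le_one, fun ω _ => le_rfl, S.const 1⟩⟩
    · rintro r ⟨ξ, hξH, hξ0, hξ1, rfl⟩
      exact S.mono g hg ξ hξH (hcomp ξ hξH hξ0 hξ1)
  -- the key per-k estimate, via independence
  have key : ∀ k, 1 ≤ k → k ≤ n →
      S.E (fun ω => fkP X β x ε k ω *
        ((1 - α) - pSh (β k) ε (∑ i ∈ Finset.Ico k n, X i ω))) ≤ 0 := by
    intro k hk1 hkn
    have hψlip : ExLip (fun t => (1 - α) - pSh (β k) ε t) :=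
      (exLip_const_sub (1 - α)).comp (exLip_pSh (β k) ε)
    have hψbd : ∃ M, ∀ t, |(1 - α) - pSh (β k) ε t| ≤ M := by
      refine ⟨|1 - α| + 1, fun t => ?_⟩
      have h1 := pSh_nonneg (β k) ε t
      have h2 := pSh_le_one (β k) ε t
      rw [abs_le]
      constructor
      · have := neg_abs_le (1 - α); linarith
      · have := le_abs_self (1 - α); linarith
    obtain ⟨c, hc1, hc2⟩ :=
      lemA S X hindep hH k n hkn (fun t => (1 - α) - pSh (β k) ε t) hψlip hψbd
    have m1 : (fun ω => 1 - pSh (β k) ε (∑ i ∈ Finset.Ico k n, X i ω)) ∈ S.H :=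
      mem_comp1 S (hpk_mem k) (exLip_const_sub 1)
    -- the constant is ≤ 0
    have hcle : c ≤ 0 := by
      have hc1' : S.E (fun ω =>
          (1 - pSh (β k) ε (∑ i ∈ Finset.Ico k n, X i ω)) + (-α)) = c := by
        rw [← hc1]
        congr 1
        funext ω
        ring
      rw [E_add_const S m1 (-α)] at hc1'
      have e3 : S.E (fun ω => 1 - pSh (β k) ε (∑ i ∈ Finset.Ico k n, X i ω)) ≤ α := by
        have step1 : S.E (fun ω => 1 - pSh (β k) ε (∑ i ∈ Finset.Ico k n, X i ω)) ≤
            S.V {ω | β k + ε / 4 ≤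
              |∑ i ∈ Finset.range k, X i ω - ∑ i ∈ Finset.range n, X i ω|} := by
          apply hle_V _ _ m1
          intro ξ hξH hξ0 hξ1 ω
          by_cases hcase : β k + ε / 4 ≤
              |∑ i ∈ Finset.range k, X i ω - ∑ i ∈ Finset.range n, X i ω|
          · have hξ := hξ1 ω hcase
            have := pSh_nonneg (β k) ε (∑ i ∈ Finset.Ico k n, X i ω)
            linarith
          · push_neg at hcase
            have habs : |∑ i ∈ Finset.Ico k n, X i ω| =
                |∑ i ∈ Finset.range k, X i ω - ∑ i ∈ Finset.range n, X i ω| := by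
              rw [Finset.sum_Ico_eq_sub _ hkn, abs_sub_comm]
            have hone : pSh (β k) ε (∑ i ∈ Finset.Ico k n, X i ω) = 1 :=
              pSh_eq_one hε (by rw [habs]; exact hcase)
            rw [hone]
            simpa using hξ0 ω
        exact step1.trans (hyp (ε / 4) hε4 k hk1 hkn)
      linarith
    -- factor the prefix out
    have fact := hc2 (FkA β x ε k) (isBL_FkA β x ε k).1 (isBL_FkA β x ε k).2
      (FkA_nonneg β x ε k)
    have e1 : (fun ω => FkA β x ε k (fun i => X i ω) *
          ((1 - α) - pSh (β k) ε (∑ i ∈ Finset.Ico k n, X i ω)))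
        = (fun ω => fkP X β x ε k ω *
          ((1 - α) - pSh (β k) ε (∑ i ∈ Finset.Ico k n, X i ω))) := by
      funext ω
      rw [FkA_apply]
    have e2 : (fun ω => FkA β x ε k (fun i => X i ω) * c)
        = (fun ω => fkP X β x ε k ω * c) := by
      funext ω
      rw [FkA_apply]
    rw [e1, e2] at fact
    rw [fact]
    have hlipc : ExLip (fun t : ℝ => t * c) := by
      refine exLip_of_dist |c| _ fun a b => ?_
      rw [Real.dist_eq, Real.dist_eq]
      apply le_of_eq
      rw [show a * c - b * c = (a - b) * c by ring, abs_mul, mul_comm]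
    have hmemc : (fun ω => fkP X β x ε k ω * c) ∈ S.H := mem_comp1 S (hfk_mem k) hlipc
    refine E_le_const S hmemc fun ω => ?_
    nlinarith [fkP_nonneg X β x ε k ω, hcle]
  -- V(A) ≤ E[F]
  have hVA : S.V {ω | ∃ k, 1 ≤ k ∧ k ≤ n ∧
      x + ε < |∑ i ∈ Finset.range k, X i ω| - β k} ≤ S.E FF := by
    apply hV_le _ _ hF_mem
    · intro ω
      show (0:ℝ) ≤ ∑ k ∈ Finset.Icc 1 n, fkP X β x ε k ω
      exact Finset.sum_nonneg fun k _ => fkP_nonneg X β x ε k ω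
    · rintro ω ⟨k, hk1, hkn, hgt⟩
      have hprod0 : ∏ j ∈ Finset.Icc 1 n,
          (1 - uSh x ε (|∑ i ∈ Finset.range j, X i ω| - β j)) = 0 :=
        Finset.prod_eq_zero (Finset.mem_Icc.mpr ⟨hk1, hkn⟩)
          (by rw [uSh_eq_one hε hgt]; ring)
      have hFFone : FF ω = 1 := by
        show (∑ k ∈ Finset.Icc 1 n, fkP X β x ε k ω) = 1
        unfold fkP
        rw [telescope (fun j => uSh x ε (|∑ i ∈ Finset.range j, X i ω| - β j)) n, hprod0]
        ring
      rw [hFFone]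
  -- E[G] ≤ V(B)
  have hGV : S.E GG ≤ S.V {ω | x < |∑ i ∈ Finset.range n, X i ω|} := by
    apply hle_V _ _ hG_mem
    intro ξ hξH hξ0 hξ1 ω
    show (∑ k ∈ Finset.Icc 1 n,
        fkP X β x ε k ω * pSh (β k) ε (∑ i ∈ Finset.Ico k n, X i ω)) ≤ ξ ω
    by_cases hB : x < |∑ i ∈ Finset.range n, X i ω|
    · have hξ := hξ1 ω hB
      have hsum_le : ∑ k ∈ Finset.Icc 1 n,
          fkP X β x ε k ω * pSh (β k) ε (∑ i ∈ Finset.Ico k n, X i ω)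
          ≤ ∑ k ∈ Finset.Icc 1 n, fkP X β x ε k ω := by
        refine Finset.sum_le_sum fun k _ => ?_
        have h1 := pSh_le_one (β k) ε (∑ i ∈ Finset.Ico k n, X i ω)
        have h0 := fkP_nonneg X β x ε k ω
        nlinarith [pSh_nonneg (β k) ε (∑ i ∈ Finset.Ico k n, X i ω)]
      have hsumF : (∑ k ∈ Finset.Icc 1 n, fkP X β x ε k ω) ≤ 1 := by
        have htel : (∑ k ∈ Finset.Icc 1 n, fkP X β x ε k ω) = 1 - ∏ j ∈ Finset.Icc 1 n,
            (1 - uSh x ε (|∑ i ∈ Finset.range j, X i ω| - β j)) := by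
          unfold fkP
          exact telescope _ n
        rw [htel]
        have hp : 0 ≤ ∏ j ∈ Finset.Icc 1 n,
            (1 - uSh x ε (|∑ i ∈ Finset.range j, X i ω| - β j)) :=
          Finset.prod_nonneg fun j _ => by
            linarith [uSh_le_one x ε (|∑ i ∈ Finset.range j, X i ω| - β j)]
        linarith
      linarith
    · push_neg at hB
      have hzero : ∑ k ∈ Finset.Icc 1 n,
          fkP X β x ε k ω * pSh (β k) ε (∑ i ∈ Finset.Ico k n, X i ω) = 0 := by
        apply Finset.sum_eq_zero
        intro k hk
        obtain ⟨hk1, hkn⟩ := Finset.mem_Icc.mp hk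
        by_cases hu : uSh x ε (|∑ i ∈ Finset.range k, X i ω| - β k) = 0
        · unfold fkP
          rw [hu, zero_mul, zero_mul]
        · by_cases hp : pSh (β k) ε (∑ i ∈ Finset.Ico k n, X i ω) = 0
          · rw [hp, mul_zero]
          · exfalso
            have hupos : 0 < uSh x ε (|∑ i ∈ Finset.range k, X i ω| - β k) :=
              lt_of_le_of_ne (uSh_nonneg _ _ _) (Ne.symm hu)
            have hppos : 0 < pSh (β k) ε (∑ i ∈ Finset.Ico k n, X i ω) :=
              lt_of_le_of_ne (pSh_nonneg _ _ _) (Ne.symm hp)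
            have h1 := uSh_pos hε hupos
            have h2 := pSh_pos hε hppos
            have habs : |∑ i ∈ Finset.Ico k n, X i ω| =
                |∑ i ∈ Finset.range k, X i ω - ∑ i ∈ Finset.range n, X i ω| := by
              rw [Finset.sum_Ico_eq_sub _ hkn, abs_sub_comm]
            have h3 := abs_sub_abs_le_abs_sub (∑ i ∈ Finset.range k, X i ω)
              (∑ i ∈ Finset.range n, X i ω)
            rw [← habs] at h3
            linarith
      rw [hzero]
      exact hξ0 ω
  -- E[D] ≤ 0
  have hED : S.E DD ≤ 0 := by
    have h1 : S.E DD ≤ ∑ k ∈ Finset.Icc 1 n, S.E (fun ω =>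
        fkP X β x ε k ω * ((1 - α) - pSh (β k) ε (∑ i ∈ Finset.Ico k n, X i ω))) := by
      rw [hDD]
      exact E_sum_le S _ _ fun k _ => mem_mul S (hfk_mem k)
        (mem_comp1 S (hpk_mem k) (exLip_const_sub (1 - α)))
    refine h1.trans (Finset.sum_nonpos fun k hk => ?_)
    obtain ⟨hk1, hkn⟩ := Finset.mem_Icc.mp hk
    exact key k hk1 hkn
  -- subadditivity step
  have hsub : (1 - α) * S.E FF ≤ S.E GG + S.E DD := by
    have h1 := S.subadd _ hG_mem _ hD_mem
    have e : (fun ω => GG ω + DD ω) = fun ω => (1 - α) * FF ω := by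
      funext ω
      simp only [hGG, hDD, hFF]
      rw [← Finset.sum_add_distrib, Finset.mul_sum]
      refine Finset.sum_congr rfl fun k _ => ?_
      ring
    rw [e] at h1
    have h2 : S.E (fun ω => (1 - α) * FF ω) = (1 - α) * S.E FF := S.poshomog _ hF_mem _ h1α
    linarith
  calc (1 - α) * S.V {ω | ∃ k, 1 ≤ k ∧ k ≤ n ∧
          x + ε < |∑ i ∈ Finset.range k, X i ω| - β k}
      ≤ (1 - α) * S.E FF := mul_le_mul_of_nonneg_left hVA h1α
    _ ≤ S.E GG + S.E DD := hsub
    _ ≤ S.V {ω | x < |∑ i ∈ Finset.range n, X i ω|} + 0 := add_le_add hGV hED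
    _ = S.V {ω | x < |∑ i ∈ Finset.range n, X i ω|} := by ring
end
end
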